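/- arXiv:1112.5524 — 7 statements merged into one kernel-verified Lean document; each statement's English description precedes it below -/
import Mathlib

section
/- Let B₁,…,B_m be pairwise disjoint vertex sets in a graph G such that no two vertices in distinct B_i are adjacent. Let H be obtained from G by deleting each B_i and adding a clique on N_G(B_i). Then π(G) ≤ π(H) + max_i π(G[B_i]). -/
/-- A colouring `φ` of a graph `G` is nonrepetitive if no path has its sequence of
colours of the form `l ++ l` for a nonempty list `l`. -/
def Nonrepetitive {V α : Type*} (G : SimpleGraph V) (φ : V → α) : Prop :=
  ∀ ⦃u v : V⦄ (p : G.Walk u v), p.IsPath →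
    ∀ l : List α, l ≠ [] → p.support.map φ ≠ l ++ l

/-- The neighbourhood of a set `S`: vertices outside `S` adjacent to some vertex of `S`. -/
def setNbhd {V : Type*} (G : SimpleGraph V) (S : Set V) : Set V :=
  {v | v ∉ S ∧ ∃ u ∈ S, G.Adj u v}

/-- The graph `H` obtained from `G` by deleting each block `B i` and adding a clique
on `N_G(B i)`. Its vertices are those of `G` lying in no block. -/
def blockGraph {V : Type*} (G : SimpleGraph V) {m : ℕ} (B : Fin m → Set V) :
    SimpleGraph {v : V // ∀ i, v ∉ B i} :=
  SimpleGraph.fromRel (fun u v =>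
    G.Adj u.1 v.1 ∨ ∃ i, u.1 ∈ setNbhd G (B i) ∧ v.1 ∈ setNbhd G (B i))

/-- If a list doubles after applying an injective map, it is itself a double. -/
theorem split_double {α β : Type*} {g : α → β} (hg : Function.Injective g)
    {L : List α} {l : List β} (h : L.map g = l ++ l) :
    ∃ L₁ : List α, L = L₁ ++ L₁ ∧ L₁.map g = l := by
  refine ⟨L.take l.length, ?_, ?_⟩
  · have h1 : (L.take l.length).map g = l := by
      rw [List.map_take, h]; simp [List.take_left]
    have h2 : (L.drop l.length).map g = l := by
      rw [List.map_drop, h]; simp [List.drop_left]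
    have : L.take l.length = L.drop l.length :=
      List.map_injective_iff.mpr hg (h1.trans h2.symm)
    conv_lhs => rw [← List.take_append_drop l.length L, ← this]
  · rw [List.map_take, h]; simp [List.take_left]

/-- A walk of `G` with all vertices in `s` lifts to the induced subgraph on `s`. -/
theorem walk_induce {V : Type*} {G : SimpleGraph V} {s : Set V} :
    ∀ {u v : V} (p : G.Walk u v) (hu : u ∈ s) (hv : v ∈ s)
      (hs : ∀ z ∈ p.support, z ∈ s),
      ∃ q : (G.induce s).Walk ⟨u, hu⟩ ⟨v, hv⟩, q.support.map Subtype.val = p.support := by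
  intro u v p
  induction p with
  | nil => intro hu hv _; exact ⟨SimpleGraph.Walk.nil, rfl⟩
  | cons h p ih =>
    rename_i u w v
    intro hu hv hs
    have hw : w ∈ s := hs _ (by simp)
    obtain ⟨q, hq⟩ := ih hw hv (fun z hz => hs z (by simp [hz]))
    exact ⟨SimpleGraph.Walk.cons (by exact h) q, by exact congrArg (List.cons u) hq⟩

/-- A walk all of whose vertices lie in blocks stays in the block of its start. -/
theorem walk_in_block {V : Type*} {G : SimpleGraph V} {m : ℕ} {B : Fin m → Set V}
    (hnoadj : ∀ i j, i ≠ j → ∀ u ∈ B i, ∀ v ∈ B j, ¬ G.Adj u v) :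
    ∀ {w v : V} (p : G.Walk w v) (i : Fin m) (hw : w ∈ B i)
      (hall : ∀ z ∈ p.support, ∃ j, z ∈ B j), ∀ z ∈ p.support, z ∈ B i := by
  intro w v p
  induction p with
  | nil => intro i hw _ z hz; simp at hz; subst hz; exact hw
  | cons h p ih =>
    rename_i w w' v
    intro i hw hall z hz
    obtain ⟨j, hj⟩ := hall w' (by simp)
    have hij : j = i := by
      by_contra hne
      exact hnoadj i j (fun e => hne e.symm) w hw w' hj h
    subst hij
    rcases List.mem_cons.mp (by simpa using hz) with h1 | h2
    · subst h1; exact hw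
    · exact ih j hj (fun z hz => hall z (by simp [hz])) z h2

/-- Contracting the block segments of a path of `G` yields a path of `blockGraph G B`
traversing exactly the non-block vertices. -/
theorem contract_walk {V : Type*} {G : SimpleGraph V} {m : ℕ} {B : Fin m → Set V}
    (hdisj : ∀ i j, i ≠ j → Disjoint (B i) (B j))
    (hnoadj : ∀ i j, i ≠ j → ∀ u ∈ B i, ∀ v ∈ B j, ¬ G.Adj u v)
    (nbb : V → Bool) (hnbb : ∀ v, nbb v = true ↔ ∀ i, v ∉ B i) :
    ∀ {w v : V} (p : G.Walk w v), p.IsPath →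
      (∃ z ∈ p.support, nbb z = true) →
      ∃ (x : V) (hx : ∀ i, x ∉ B i) (y : V) (hy : ∀ i, y ∉ B i)
        (q : (blockGraph G B).Walk ⟨x, hx⟩ ⟨y, hy⟩),
        q.support.map Subtype.val = p.support.filter nbb ∧
        (w = x ∨ ∃ i, w ∈ B i ∧ x ∈ setNbhd G (B i)) ∧
        (v = y ∨ ∃ j, v ∈ B j ∧ y ∈ setNbhd G (B j)) := by
  intro w v p
  induction p with
  | nil =>
    intro _ hz
    obtain ⟨z, hz, hz'⟩ := hz
    simp only [SimpleGraph.Walk.support_nil, List.mem_singleton] at hz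
    subst hz
    refine ⟨z, (hnbb z).mp hz', z, (hnbb z).mp hz', SimpleGraph.Walk.nil, ?_, Or.inl rfl, Or.inl rfl⟩
    simp [hz']
  | cons h p ih =>
    rename_i w w' v
    intro hp hz
    have hp' : p.IsPath := hp.of_cons
    have hwns : w ∉ p.support := (SimpleGraph.Walk.cons_isPath_iff h p).mp hp |>.2
    by_cases hex : ∃ z ∈ p.support, nbb z = true
    · obtain ⟨x', hx', y, hy, q', hq', hstart, hend⟩ := ih hp' hex
      have hxmem : x' ∈ p.support := by
        have : (⟨x', hx'⟩ : {v : V // ∀ i, v ∉ B i}) ∈ q'.support := q'.start_mem_support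
        have : x' ∈ q'.support.map Subtype.val := List.mem_map_of_mem this
        rw [hq'] at this
        exact List.mem_of_mem_filter this
      by_cases hw : ∀ i, w ∉ B i
      · -- `w` is a non-block vertex: attach it to the front of the contracted path
        have hadj : (blockGraph G B).Adj ⟨w, hw⟩ ⟨x', hx'⟩ := by
          rw [blockGraph, SimpleGraph.fromRel_adj]
          constructor
          · intro he
            have : w = x' := congrArg Subtype.val he
            subst this; exact hwns hxmem
          · rcases hstart with he | ⟨i, hwi, hxn⟩
            · subst he; exact Or.inl (Or.inl h)
            · exact Or.inl (Or.inr ⟨i, ⟨hw i, w', hwi, h.symm⟩, hxn⟩)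
        refine ⟨w, hw, y, hy, SimpleGraph.Walk.cons hadj q', ?_, Or.inl rfl, hend⟩
        have : nbb w = true := (hnbb w).mpr hw
        simp [hq', this]
      · -- `w` lies in some block
        push_neg at hw
        obtain ⟨i, hwi⟩ := hw
        have hxsn : x' ∈ setNbhd G (B i) := by
          rcases hstart with he | ⟨i', hwi', hxn⟩
          · subst he; exact ⟨hx' i, w, hwi, h⟩
          · have : i' = i := by
              by_contra hne
              exact hnoadj i i' (fun e => hne e.symm) w hwi w' hwi' h
            subst this; exact hxn
        refine ⟨x', hx', y, hy, q', ?_, Or.inr ⟨i, hwi, hxsn⟩, hend⟩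
        have : nbb w = false := by
          rw [Bool.eq_false_iff]
          intro hc
          exact ((hnbb w).mp hc) i hwi
        simp [hq', this]
    · -- all of `p` lies in blocks, hence in a single block, and `w` is non-block
      obtain ⟨z, hzmem, hznb⟩ := hz
      have hzw : z = w := by
        rcases List.mem_cons.mp (by simpa using hzmem) with h1 | h2
        · exact h1
        · exact absurd ⟨z, h2, hznb⟩ hex
      subst hzw
      have hw : ∀ i, z ∉ B i := (hnbb z).mp hznb
      have hallb : ∀ x ∈ p.support, ∃ j, x ∈ B j := by
        intro x hx
        by_contra hc
        push_neg at hc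
        exact hex ⟨x, hx, (hnbb x).mpr hc⟩
      obtain ⟨j, hw'j⟩ := hallb w' p.start_mem_support
      have hvj : v ∈ B j := walk_in_block hnoadj p j hw'j hallb v p.end_mem_support
      refine ⟨z, hw, z, hw, SimpleGraph.Walk.nil, ?_, Or.inl rfl,
        Or.inr ⟨j, hvj, hw j, w', hw'j, h.symm⟩⟩
      have hfil : p.support.filter nbb = [] := by
        rw [List.filter_eq_nil_iff]
        intro x hx
        exact fun hc => hex ⟨x, hx, hc⟩
      simp [hznb, hfil]

open Classical in
/-- The combined colouring: non-block vertices use the colouring of `blockGraph`,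
block vertices (shifted by `a`) use the colouring of their own block. -/
noncomputable def psiAux {V : Type*} {m a b : ℕ} (B : Fin m → Set V)
    (φH : {v : V // ∀ i, v ∉ B i} → Fin a) (φB : ∀ i : Fin m, B i → Fin b) :
    V → Fin (a + b) := fun v =>
  if h : ∃ i, v ∈ B i then Fin.natAdd a (φB h.choose ⟨v, h.choose_spec⟩)
  else Fin.castAdd b (φH ⟨v, fun i hi => h ⟨i, hi⟩⟩)

theorem psiAux_nonblock {V : Type*} {m a b : ℕ} {B : Fin m → Set V}
    {φH : {v : V // ∀ i, v ∉ B i} → Fin a} {φB : ∀ i : Fin m, B i → Fin b}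
    {v : V} (h : ∀ i, v ∉ B i) : psiAux B φH φB v = Fin.castAdd b (φH ⟨v, h⟩) := by
  have h' : ¬ ∃ i, v ∈ B i := fun ⟨i, hi⟩ => h i hi
  simp [psiAux, h']

theorem psiAux_block {V : Type*} {m a b : ℕ} {B : Fin m → Set V}
    (hdisj : ∀ i j, i ≠ j → Disjoint (B i) (B j))
    {φH : {v : V // ∀ i, v ∉ B i} → Fin a} {φB : ∀ i : Fin m, B i → Fin b}
    {v : V} {i : Fin m} (hv : v ∈ B i) :
    psiAux B φH φB v = Fin.natAdd a (φB i ⟨v, hv⟩) := by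
  have h : ∃ j, v ∈ B j := ⟨i, hv⟩
  have hji : h.choose = i := by
    by_contra hne
    exact Set.disjoint_left.mp (hdisj _ _ hne) h.choose_spec hv
  rw [psiAux, dif_pos h]
  congr 1
  subst hji
  rfl

theorem psiAux_lt_iff {V : Type*} {m a b : ℕ} {B : Fin m → Set V}
    (hdisj : ∀ i j, i ≠ j → Disjoint (B i) (B j))
    {φH : {v : V // ∀ i, v ∉ B i} → Fin a} {φB : ∀ i : Fin m, B i → Fin b}
    {v : V} : (psiAux B φH φB v).val < a ↔ ∀ i, v ∉ B i := by
  by_cases h : ∀ i, v ∉ B i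
  · simp [psiAux_nonblock h, h, Fin.is_lt]
  · simp only [h, iff_false, not_lt]
    push_neg at h
    obtain ⟨i, hi⟩ := h
    rw [psiAux_block hdisj hi]
    simp [Fin.le_def]

/-- Let `B 1, …, B m` be pairwise disjoint vertex sets in `G` with no edges between
distinct blocks, and let `H` be obtained from `G` by deleting each `B i` and adding a
clique on `N_G(B i)`.  Then `π(G) ≤ π(H) + max_i π(G[B i])`. -/
theorem pi_le_blocks {V : Type*} (G : SimpleGraph V) {m : ℕ} (B : Fin m → Set V)
    (hdisj : ∀ i j, i ≠ j → Disjoint (B i) (B j))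
    (hnoadj : ∀ i j, i ≠ j → ∀ u ∈ B i, ∀ v ∈ B j, ¬ G.Adj u v)
    (a b : ℕ)
    (hH : ∃ φ : {v : V // ∀ i, v ∉ B i} → Fin a, Nonrepetitive (blockGraph G B) φ)
    (hB : ∀ i : Fin m, ∃ φ : (B i) → Fin b, Nonrepetitive (G.induce (B i)) φ) :
    ∃ φ : V → Fin (a + b), Nonrepetitive G φ := by
  classical
  obtain ⟨φH, hφH⟩ := hH
  choose φB hφB using hB
  have hnatinj : Function.Injective (fun x : Fin b => Fin.natAdd a x) := by
    intro x y hxy; simpa [Fin.ext_iff] using hxy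
  have hcastinj : Function.Injective (fun x : Fin a => Fin.castAdd b x) := by
    intro x y hxy; simpa [Fin.ext_iff] using hxy
  refine ⟨psiAux B φH φB, fun u v p hp l hl heq => ?_⟩
  by_cases hall : ∀ z ∈ p.support, ∃ j, z ∈ B j
  · -- the whole path lies in one block
    obtain ⟨i, hui⟩ := hall u p.start_mem_support
    have hmem : ∀ z ∈ p.support, z ∈ B i := walk_in_block hnoadj p i hui hall
    obtain ⟨q, hq⟩ := walk_induce p hui (hmem v p.end_mem_support) hmem
    have hqpath : q.IsPath :=
      SimpleGraph.Walk.IsPath.mk' (List.Nodup.of_map Subtype.val (hq ▸ hp.support_nodup))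
    have hcol : (q.support.map (φB i)).map (fun x : Fin b => Fin.natAdd a x) = l ++ l := by
      rw [← heq, ← hq, List.map_map, List.map_map]
      refine List.map_congr_left (fun z hz => ?_)
      exact (psiAux_block hdisj z.2).symm
    obtain ⟨L₁, hL, hgL⟩ := split_double hnatinj hcol
    have hL₁ne : L₁ ≠ [] := by
      intro hc; rw [hc] at hgL; exact hl hgL.symm
    exact hφB i q hqpath L₁ hL₁ne hL
  · -- the path contains a non-block vertex: contract into `blockGraph`
    push_neg at hall
    obtain ⟨z, hzs, hznb⟩ := hall
    set nbb : V → Bool := fun z => decide (∀ i, z ∉ B i) with hnbbdef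
    have hnbb : ∀ v, nbb v = true ↔ ∀ i, v ∉ B i := by intro v; simp [hnbbdef]
    obtain ⟨x, hx, y, hy, q, hq, -, -⟩ :=
      contract_walk hdisj hnoadj nbb hnbb p hp ⟨z, hzs, (hnbb z).mpr hznb⟩
    have hqpath : q.IsPath :=
      SimpleGraph.Walk.IsPath.mk'
        (List.Nodup.of_map Subtype.val (hq ▸ hp.support_nodup.filter nbb))
    set pc : Fin (a + b) → Bool := fun c => decide (c.val < a) with hpcdef
    have hcol : (q.support.map φH).map (fun x : Fin a => Fin.castAdd b x)
        = l.filter pc ++ l.filter pc := by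
      have e1 : (q.support.map φH).map (fun x : Fin a => Fin.castAdd b x)
          = (q.support.map Subtype.val).map (psiAux B φH φB) := by
        rw [List.map_map, List.map_map]
        refine List.map_congr_left (fun w hw => ?_)
        exact (psiAux_nonblock w.2).symm
      have e2 : (p.support.filter nbb).map (psiAux B φH φB)
          = (p.support.map (psiAux B φH φB)).filter pc := by
        rw [List.filter_map]
        congr 1
        refine (List.filter_congr (fun w _ => ?_)).symm
        show pc (psiAux B φH φB w) = nbb w
        rw [hpcdef, hnbbdef]
        exact decide_eq_decide.mpr (psiAux_lt_iff hdisj)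
      rw [e1, hq, e2, heq, List.filter_append]
    obtain ⟨L₁, hL, hgL⟩ := split_double hcastinj hcol
    have hl'ne : l.filter pc ≠ [] := by
      intro hc
      have hmemz : psiAux B φH φB z ∈ (p.support.map (psiAux B φH φB)).filter pc :=
        List.mem_filter.mpr ⟨List.mem_map_of_mem hzs, by
          rw [hpcdef]; exact decide_eq_true ((psiAux_lt_iff hdisj).mpr hznb)⟩
      rw [heq, List.filter_append, hc] at hmemz
      simp at hmemz
    have hL₁ne : L₁ ≠ [] := by
      intro hc; rw [hc] at hgL; exact hl'ne hgL.symm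
    exact hφH q hqpath L₁ hL₁ne hL
end

section
/- Every graph G with pathwidth k contains pairwise disjoint vertex sets B₁,…,B_m such that (1) no two vertices in distinct B_i are adjacent, (2) each G[B_i] has pathwidth at most k−1, and (3) the graph H obtained from G by deleting each B_i and adding a clique on N_G(B_i) is a subgraph of P_m · K_{k+1} (the lexicographic product of a path with a complete graph). -/
/-- A path decomposition of a graph `G`: a finite sequence of bags covering every vertex
and every edge, such that the bags containing any fixed vertex are consecutive. -/
structure PathDecomp {V : Type*} (G : SimpleGraph V) where
  len : ℕ
  bag : Fin len → Finset V
  mem_bag : ∀ v : V, ∃ i, v ∈ bag i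
  edge_mem : ∀ ⦃u v : V⦄, G.Adj u v → ∃ i, u ∈ bag i ∧ v ∈ bag i
  consecutive : ∀ (v : V) (i j k : Fin len), i ≤ j → j ≤ k →
    v ∈ bag i → v ∈ bag k → v ∈ bag j

/-- `G` has pathwidth at most `k`: some path decomposition has all bags of size `≤ k + 1`. -/
def HasPathwidthLE {V : Type*} (G : SimpleGraph V) (k : ℕ) : Prop :=
  ∃ d : PathDecomp G, ∀ i, (d.bag i).card ≤ k + 1

/-- The lexicographic product `P_m · K_{k+1}` of the path on `m` vertices with the
complete graph on `k + 1` vertices: each vertex of the path is replaced by a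
`(k+1)`-clique and each edge by a complete bipartite graph. -/
def pathLexComplete (m k : ℕ) : SimpleGraph (Fin m × Fin (k + 1)) :=
  SimpleGraph.fromRel (fun x y => (SimpleGraph.pathGraph m).Adj x.1 y.1 ∨ x.1 = y.1)


namespace PWAux

attribute [local instance] Classical.propDecidable

variable {V : Type*} {G : SimpleGraph V}

/-- The bags, re-indexed by `ℕ` (empty outside the range). -/
noncomputable def Bg (d : PathDecomp G) (t : ℕ) : Finset V :=
  if h : t < d.len then d.bag ⟨t, h⟩ else ∅

variable (d : PathDecomp G)

lemma lt_len_of_mem_Bg {v : V} {t : ℕ} (h : v ∈ Bg d t) : t < d.len := by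
  by_contra h'
  simp [Bg, h'] at h

lemma mem_Bg_of_bag {v : V} {i : Fin d.len} (h : v ∈ d.bag i) : v ∈ Bg d i.1 := by
  simpa [Bg, i.isLt] using h

lemma bag_of_mem_Bg {v : V} {t : ℕ} (h : v ∈ Bg d t) :
    v ∈ d.bag ⟨t, lt_len_of_mem_Bg d h⟩ := by
  have ht := lt_len_of_mem_Bg d h
  simpa [Bg, ht] using h

lemma exists_mem_Bg (v : V) : ∃ t, v ∈ Bg d t := by
  obtain ⟨i, hi⟩ := d.mem_bag v
  exact ⟨i.1, mem_Bg_of_bag d hi⟩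

lemma mem_Bg_of_between {v : V} {a b c : ℕ} (hab : a ≤ b) (hbc : b ≤ c)
    (ha : v ∈ Bg d a) (hc : v ∈ Bg d c) : v ∈ Bg d b := by
  have hc' := lt_len_of_mem_Bg d hc
  have ha' := lt_len_of_mem_Bg d ha
  have hb : b < d.len := lt_of_le_of_lt hbc hc'
  have := d.consecutive v ⟨a, ha'⟩ ⟨b, hb⟩ ⟨c, hc'⟩ (Fin.mk_le_mk.mpr hab)
    (Fin.mk_le_mk.mpr hbc) (by simpa [Bg, ha'] using ha) (by simpa [Bg, hc'] using hc)
  simpa [Bg, hb] using this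

/-- The last time at which `v` is alive. -/
noncomputable def Rt (v : V) : ℕ :=
  if h : ((Finset.range d.len).filter fun t => v ∈ Bg d t).Nonempty
  then ((Finset.range d.len).filter fun t => v ∈ Bg d t).max' h else 0

lemma le_Rt {v : V} {s : ℕ} (h : v ∈ Bg d s) : s ≤ Rt d v := by
  have hs : s ∈ (Finset.range d.len).filter fun t => v ∈ Bg d t := by
    simp [Finset.mem_filter, Finset.mem_range, lt_len_of_mem_Bg d h, h]
  rw [Rt, dif_pos ⟨s, hs⟩]
  exact Finset.le_max' _ _ hs

lemma mem_Bg_Rt {v : V} {s : ℕ} (h : v ∈ Bg d s) : v ∈ Bg d (Rt d v) := by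
  have hs : s ∈ (Finset.range d.len).filter fun t => v ∈ Bg d t := by
    simp [Finset.mem_filter, Finset.mem_range, lt_len_of_mem_Bg d h, h]
  rw [Rt, dif_pos ⟨s, hs⟩]
  have := Finset.max'_mem _ (⟨s, hs⟩ : Finset.Nonempty ((Finset.range d.len).filter fun t => v ∈ Bg d t))
  rw [Finset.mem_filter] at this
  exact this.2

/-- The greedy next boundary after time `s`. -/
noncomputable def nxt (s : ℕ) : ℕ := max s ((Bg d s).sup (Rt d)) + 1

lemma lt_nxt (s : ℕ) : s < nxt d s :=
  Nat.lt_succ_of_le (le_max_left _ _)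

lemma alive_lt_nxt {v : V} {s u : ℕ} (hs : v ∈ Bg d s) (hu : v ∈ Bg d u) : u < nxt d s := by
  have h1 : u ≤ Rt d v := le_Rt d hu
  have h2 : Rt d v ≤ (Bg d s).sup (Rt d) := Finset.le_sup hs
  exact Nat.lt_succ_of_le (le_trans (le_trans h1 h2) (le_max_right _ _))

lemma exists_cross {v : V} {s u : ℕ} (_hv : v ∈ Bg d u) (h1 : s < u) (h2 : u < nxt d s) :
    ∃ x, x ∈ Bg d s ∧ x ∈ Bg d u := by
  have hu : u ≤ max s ((Bg d s).sup (Rt d)) := Nat.lt_succ_iff.mp h2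
  have hsup : u ≤ (Bg d s).sup (Rt d) := by
    rcases max_cases s ((Bg d s).sup (Rt d)) with ⟨h, h'⟩ | ⟨h, h'⟩ <;> omega
  obtain ⟨x, hx, hux⟩ : ∃ x ∈ Bg d s, u ≤ Rt d x := by
    by_contra hcon
    push_neg at hcon
    have hpos : (⊥ : ℕ) < u := by
      have : 0 < u := Nat.lt_of_le_of_lt (Nat.zero_le s) h1
      simpa using this
    have := (Finset.sup_lt_iff hpos).mpr hcon
    omega
  exact ⟨x, hx, mem_Bg_of_between d (le_of_lt h1) hux hx (mem_Bg_Rt d hx)⟩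

/-- The sequence of boundary times. -/
noncomputable def bnd : ℕ → ℕ
  | 0 => 0
  | i + 1 => nxt d (bnd i)

lemma bnd_zero : bnd d 0 = 0 := rfl

lemma bnd_succ (i : ℕ) : bnd d (i + 1) = nxt d (bnd d i) := rfl

lemma bnd_lt_succ (i : ℕ) : bnd d i < bnd d (i + 1) := lt_nxt d _

lemma bnd_mono : StrictMono (bnd d) := strictMono_nat_of_lt_succ (bnd_lt_succ d)

lemma le_bnd (i : ℕ) : i ≤ bnd d i := by
  induction i with
  | zero => simp [bnd_zero]
  | succ n ih => have := bnd_lt_succ d n; omega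

lemma bnd_unique {v : V} {i j : ℕ} (hi : v ∈ Bg d (bnd d i)) (hj : v ∈ Bg d (bnd d j)) :
    i = j := by
  rcases Nat.lt_trichotomy i j with h | h | h
  · exfalso
    have h1 : bnd d j < bnd d (i + 1) := by
      rw [bnd_succ]; exact alive_lt_nxt d hi hj
    have h3 : bnd d (i + 1) ≤ bnd d j := (bnd_mono d).monotone h
    omega
  · exact h
  · exfalso
    have h1 : bnd d i < bnd d (j + 1) := by
      rw [bnd_succ]; exact alive_lt_nxt d hj hi
    have h3 : bnd d (j + 1) ≤ bnd d i := (bnd_mono d).monotone h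
    omega

/-- The blocks: vertices alive only strictly inside the window `(bnd i, bnd (i+1))`. -/
def Blk (d : PathDecomp G) (i : ℕ) : Set V :=
  {v | ∀ s, v ∈ Bg d s → bnd d i < s ∧ s < bnd d (i + 1)}

lemma cover (v : V) :
    (∃ i, i < d.len ∧ v ∈ Bg d (bnd d i)) ∨
    (∃ i, i < d.len ∧ v ∈ Blk d i) := by
  obtain ⟨s0, hs0⟩ := exists_mem_Bg d v
  have hs0len : s0 < d.len := lt_len_of_mem_Bg d hs0
  by_cases hvb : ∃ i, v ∈ Bg d (bnd d i)
  · obtain ⟨i, hi⟩ := hvb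
    have hilen : bnd d i < d.len := lt_len_of_mem_Bg d hi
    exact Or.inl ⟨i, lt_of_le_of_lt (le_bnd d i) hilen, hi⟩
  · set P := fun j => bnd d j ≤ s0 with hP
    have hP0 : P 0 := by simp [hP, bnd_zero]
    set j := Nat.findGreatest P s0 with hj
    have hPj : P j := Nat.findGreatest_spec (Nat.zero_le s0) hP0
    have hjle : j ≤ s0 := Nat.findGreatest_le s0
    have hnext : s0 < bnd d (j + 1) := by
      by_cases hc : j + 1 ≤ s0
      · have hgt := Nat.findGreatest_is_greatest (P := P) (n := s0) (k := j + 1)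
          (by omega) hc
        simp only [hP, Nat.succ_eq_add_one] at hgt
        omega
      · have := le_bnd d (j + 1)
        omega
    have hjlen : j < d.len := lt_of_le_of_lt (le_trans (le_bnd d j) hPj) hs0len
    refine Or.inr ⟨j, hjlen, fun s hs => ⟨?_, ?_⟩⟩
    · rcases lt_or_ge (bnd d j) s with h | h
      · exact h
      · exact absurd (mem_Bg_of_between d h hPj hs hs0) (fun hmem => hvb ⟨j, hmem⟩)
    · rcases lt_or_ge s (bnd d (j + 1)) with h | h
      · exact h
      · exact absurd (mem_Bg_of_between d (le_of_lt hnext) h hs0 hs)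
          (fun hmem => hvb ⟨j + 1, hmem⟩)

lemma class_step {a b : V} {i j s : ℕ} (hij : i < j)
    (hai : a ∈ Bg d (bnd d i)) (has : a ∈ Bg d s)
    (hbs : b ∈ Bg d s) (hbj : b ∈ Bg d (bnd d j)) : j = i + 1 := by
  have hs : s < bnd d (i + 1) := by
    rw [bnd_succ]; exact alive_lt_nxt d hai has
  have hmono : bnd d (i + 1) ≤ bnd d j := (bnd_mono d).monotone hij
  have hmem : b ∈ Bg d (bnd d (i + 1)) := mem_Bg_of_between d (le_of_lt hs) hmono hbs hbj
  exact (bnd_unique d hmem hbj).symm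

lemma nbhd_class {a b : V} {i j s : ℕ}
    (ha : a ∈ Blk d i)
    (has : a ∈ Bg d s) (hbs : b ∈ Bg d s)
    (hbj : b ∈ Bg d (bnd d j)) : j = i ∨ j = i + 1 := by
  obtain ⟨h1, h2⟩ := ha s has
  rcases le_or_gt (bnd d j) s with hle | hlt
  · left
    have h3 : s < bnd d (j + 1) := by
      rw [bnd_succ]; exact alive_lt_nxt d hbj hbs
    have hji : j < i + 1 := (bnd_mono d).lt_iff_lt.mp (lt_of_le_of_lt hle h2)
    have hij : i < j + 1 := (bnd_mono d).lt_iff_lt.mp (lt_trans h1 h3)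
    omega
  · right
    have hij : i < j := (bnd_mono d).lt_iff_lt.mp (lt_trans h1 hlt)
    have hmono : bnd d (i + 1) ≤ bnd d j := (bnd_mono d).monotone hij
    have hmem : b ∈ Bg d (bnd d (i + 1)) :=
      mem_Bg_of_between d (le_of_lt h2) hmono hbs hbj
    exact (bnd_unique d hmem hbj).symm

end PWAux

/-- Every graph `G` with pathwidth `k` contains pairwise disjoint vertex sets
`B 1, …, B m` such that no two vertices in distinct blocks are adjacent, each induced
subgraph `G[B i]` has pathwidth at most `k - 1`, and the graph `H` obtained from `G`
by deleting each `B i` and adding a clique on `N_G(B i)` is a subgraph of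
`P_m · K_{k+1}`. -/
theorem pathwidth_attack {V : Type*} (G : SimpleGraph V) (k : ℕ)
    (hpw : HasPathwidthLE G k) :
    ∃ (m : ℕ) (B : Fin m → Set V),
      (∀ i j, i ≠ j → Disjoint (B i) (B j)) ∧
      (∀ i j, i ≠ j → ∀ u ∈ B i, ∀ v ∈ B j, ¬ G.Adj u v) ∧
      (∀ i, HasPathwidthLE (G.induce (B i)) (k - 1)) ∧
      (∃ f : {v : V // ∀ i, v ∉ B i} → Fin m × Fin (k + 1),
        Function.Injective f ∧
        ∀ u v, (blockGraph G B).Adj u v → (pathLexComplete m k).Adj (f u) (f v)) := by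
  classical
  obtain ⟨d, hd⟩ := hpw
  refine ⟨d.len, fun i => PWAux.Blk d i.1, ?_, ?_, ?_, ?_⟩
  · -- disjointness
    intro i j hij
    rw [Set.disjoint_left]
    intro v hvi hvj
    obtain ⟨s, hs⟩ := PWAux.exists_mem_Bg d v
    obtain ⟨h1, h2⟩ := hvi s hs
    obtain ⟨h3, h4⟩ := hvj s hs
    rcases Nat.lt_trichotomy i.1 j.1 with h | h | h
    · have := (PWAux.bnd_mono d).monotone (show i.1 + 1 ≤ j.1 from h)
      omega
    · exact hij (Fin.ext h)
    · have := (PWAux.bnd_mono d).monotone (show j.1 + 1 ≤ i.1 from h)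
      omega
  · -- no edges between distinct blocks
    intro i j hij u hu v hv hadj
    obtain ⟨t, hut, hvt⟩ := d.edge_mem hadj
    obtain ⟨h1, h2⟩ := hu t.1 (PWAux.mem_Bg_of_bag d hut)
    obtain ⟨h3, h4⟩ := hv t.1 (PWAux.mem_Bg_of_bag d hvt)
    rcases Nat.lt_trichotomy i.1 j.1 with h | h | h
    · have := (PWAux.bnd_mono d).monotone (show i.1 + 1 ≤ j.1 from h)
      omega
    · exact hij (Fin.ext h)
    · have := (PWAux.bnd_mono d).monotone (show j.1 + 1 ≤ i.1 from h)
      omega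
  · -- each block has pathwidth ≤ k - 1
    intro i
    refine ⟨⟨d.len, fun j => (d.bag j).subtype (· ∈ PWAux.Blk d i.1), ?_, ?_, ?_⟩, ?_⟩
    · rintro ⟨v, hv⟩
      obtain ⟨t, ht⟩ := d.mem_bag v
      exact ⟨t, Finset.mem_subtype.mpr ht⟩
    · rintro ⟨u, hu⟩ ⟨v, hv⟩ huv
      have hGuv : G.Adj u v := huv
      obtain ⟨t, h1, h2⟩ := d.edge_mem hGuv
      exact ⟨t, Finset.mem_subtype.mpr h1, Finset.mem_subtype.mpr h2⟩
    · rintro ⟨v, hv⟩ i1 j1 k1 hij hjk h1 h2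
      exact Finset.mem_subtype.mpr
        (d.consecutive v i1 j1 k1 hij hjk (Finset.mem_subtype.mp h1) (Finset.mem_subtype.mp h2))
    · intro j
      by_cases hne : ∃ x ∈ d.bag j, x ∈ PWAux.Blk d i.1
      · obtain ⟨x, hxbag, hxB⟩ := hne
        have hxs : x ∈ PWAux.Bg d j.1 := PWAux.mem_Bg_of_bag d hxbag
        obtain ⟨hj1, hj2⟩ := hxB j.1 hxs
        rw [PWAux.bnd_succ] at hj2
        obtain ⟨y, hys, hyj⟩ := PWAux.exists_cross d hxs hj1 hj2
        have hynot : y ∉ PWAux.Blk d i.1 := by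
          intro hy
          have := (hy _ hys).1
          omega
        have hyf : y ∈ d.bag j := by
          have := PWAux.bag_of_mem_Bg d hyj
          simpa using this
        have hsub : (d.bag j).filter (· ∈ PWAux.Blk d i.1) ⊆ (d.bag j).erase y := by
          intro z hz
          rw [Finset.mem_filter] at hz
          exact Finset.mem_erase.mpr ⟨fun he => hynot (he ▸ hz.2), hz.1⟩
        have h1 : ((d.bag j).filter (· ∈ PWAux.Blk d i.1)).card ≤ (d.bag j).card - 1 := by
          have := Finset.card_le_card hsub
          rwa [Finset.card_erase_of_mem hyf] at this
        have h2 := hd j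
        rw [Finset.card_subtype]
        omega
      · push_neg at hne
        have hempty : (d.bag j).subtype (· ∈ PWAux.Blk d i.1) = ∅ := by
          rw [Finset.eq_empty_iff_forall_notMem]
          rintro ⟨z, hz⟩ hmem
          exact hne z (Finset.mem_subtype.mp hmem) hz
        simp [hempty]
  · -- the embedding
    have hR : ∀ v : {v : V // ∀ i : Fin d.len, v ∉ PWAux.Blk d i.1},
        ∃ n, n < d.len ∧ v.1 ∈ PWAux.Bg d (PWAux.bnd d n) := by
      intro v
      rcases PWAux.cover d v.1 with ⟨n, hn, hmem⟩ | ⟨n, hn, hmem⟩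
      · exact ⟨n, hn, hmem⟩
      · exact absurd hmem (v.2 ⟨n, hn⟩)
    choose c hc1 hc2 using hR
    have hcard : ∀ t, (PWAux.Bg d t).card ≤ k + 1 := by
      intro t
      unfold PWAux.Bg
      split
      · exact hd _
      · simp
    have hcolex : ∀ t : ℕ, ∃ g : V → Fin (k + 1), Set.InjOn g (PWAux.Bg d t) := by
      intro t
      have h1 : Fintype.card (PWAux.Bg d t) ≤ Fintype.card (Fin (k + 1)) := by
        rw [Fintype.card_coe, Fintype.card_fin]
        exact hcard t
      obtain ⟨g⟩ := Function.Embedding.nonempty_of_card_le h1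
      refine ⟨fun v => if h : v ∈ PWAux.Bg d t then g ⟨v, h⟩ else 0, ?_⟩
      intro x hx y hy hxy
      rw [Finset.mem_coe] at hx hy
      simp only [dif_pos hx, dif_pos hy] at hxy
      exact congrArg Subtype.val (g.injective hxy)
    choose col hcol using hcolex
    refine ⟨fun v => (⟨c v, hc1 v⟩, col (PWAux.bnd d (c v)) v.1), ?_, ?_⟩
    · intro u v h
      have h1 : c u = c v := congrArg (fun x => (x.1 : ℕ)) h
      have h2 : col (PWAux.bnd d (c u)) u.1 = col (PWAux.bnd d (c v)) v.1 :=
        congrArg Prod.snd h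
      rw [h1] at h2
      have hu' := hc2 u
      rw [h1] at hu'
      exact Subtype.ext (hcol _ (Finset.mem_coe.mpr hu') (Finset.mem_coe.mpr (hc2 v)) h2)
    · intro u v huv
      simp only [blockGraph, SimpleGraph.fromRel_adj] at huv
      obtain ⟨hne, hrel⟩ := huv
      have hadjnear : ∀ x y : {v : V // ∀ i : Fin d.len, v ∉ PWAux.Blk d i.1},
          G.Adj x.1 y.1 → (c x = c y ∨ c x + 1 = c y ∨ c y + 1 = c x) := by
        intro x y hxy
        obtain ⟨t, hxt, hyt⟩ := d.edge_mem hxy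
        have hxt' := PWAux.mem_Bg_of_bag d hxt
        have hyt' := PWAux.mem_Bg_of_bag d hyt
        rcases Nat.lt_trichotomy (c x) (c y) with h | h | h
        · exact Or.inr (Or.inl (PWAux.class_step d h (hc2 x) hxt' hyt' (hc2 y)).symm)
        · exact Or.inl h
        · exact Or.inr (Or.inr (PWAux.class_step d h (hc2 y) hyt' hxt' (hc2 x)).symm)
      have hnbnear : ∀ (i : Fin d.len) (x : {v : V // ∀ i : Fin d.len, v ∉ PWAux.Blk d i.1}),
          x.1 ∈ setNbhd G (PWAux.Blk d i.1) → (c x = i.1 ∨ c x = i.1 + 1) := by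
        intro i x hx
        obtain ⟨hxnot, z, hz, hadj⟩ := hx
        obtain ⟨t, hzt, hxt⟩ := d.edge_mem hadj
        exact PWAux.nbhd_class d hz (PWAux.mem_Bg_of_bag d hzt)
          (PWAux.mem_Bg_of_bag d hxt) (hc2 x)
      have hnear : c u = c v ∨ c u + 1 = c v ∨ c v + 1 = c u := by
        rcases hrel with (h | ⟨i, hui, hvi⟩) | (h | ⟨i, hvi, hui⟩)
        · exact hadjnear u v h
        · have h1 := hnbnear i u hui
          have h2 := hnbnear i v hvi
          omega
        · rcases hadjnear v u h with h' | h' | h' <;> omega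
        · have h1 := hnbnear i u hui
          have h2 := hnbnear i v hvi
          omega
      simp only [pathLexComplete, SimpleGraph.fromRel_adj]
      constructor
      · intro he
        apply hne
        have h1 : c u = c v := congrArg (fun x => (x.1 : ℕ)) he
        have h2 : col (PWAux.bnd d (c u)) u.1 = col (PWAux.bnd d (c v)) v.1 :=
          congrArg Prod.snd he
        rw [h1] at h2
        have hu' := hc2 u
        rw [h1] at hu'
        exact Subtype.ext (hcol _ (Finset.mem_coe.mpr hu') (Finset.mem_coe.mpr (hc2 v)) h2)
      · rcases hnear with h | h | h
        · exact Or.inl (Or.inr (Fin.ext h))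
        · exact Or.inl (Or.inl (SimpleGraph.pathGraph_adj.mpr (Or.inl h)))
        · exact Or.inl (Or.inl (SimpleGraph.pathGraph_adj.mpr (Or.inr h)))
end

section
/- For every graph G with pathwidth k, the star chromatic number satisfies χ_st(G) ≤ 3k + 1. -/
/-- A proper colouring: adjacent vertices get distinct colours. -/
def ProperColouring {V α : Type*} (G : SimpleGraph V) (φ : V → α) : Prop :=
  ∀ u v : V, G.Adj u v → φ u ≠ φ v

/-- A star colouring: a proper colouring with no 2-coloured path on four vertices. -/
def StarColouring {V α : Type*} (G : SimpleGraph V) (φ : V → α) : Prop :=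
  ProperColouring G φ ∧
    ∀ ⦃u v : V⦄ (p : G.Walk u v), p.IsPath → p.support.length = 4 →
      ¬ ∃ a b : α, ∀ x ∈ p.support, φ x = a ∨ φ x = b

section PWProof

attribute [local instance] Classical.propDecidable

variable {V : Type*} {G : SimpleGraph V}

namespace PathDecomp

variable (d : PathDecomp G)

/-- Bags re-indexed by `ℕ` (empty beyond `len`). -/
noncomputable def Bg (i : ℕ) : Finset V := if h : i < d.len then d.bag ⟨i, h⟩ else ∅

lemma Bg_empty {i : ℕ} (h : d.len ≤ i) : d.Bg i = ∅ := dif_neg (not_lt.mpr h)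

lemma lt_len_of_mem_Bg {v : V} {i : ℕ} (h : v ∈ d.Bg i) : i < d.len := by
  by_contra hc
  rw [d.Bg_empty (not_lt.mp hc)] at h
  exact absurd h (Finset.notMem_empty v)

lemma mem_Bg_consec {v : V} {i j m : ℕ} (hij : i ≤ j) (hjm : j ≤ m)
    (hi : v ∈ d.Bg i) (hm : v ∈ d.Bg m) : v ∈ d.Bg j := by
  have h1 : i < d.len := d.lt_len_of_mem_Bg hi
  have h3 : m < d.len := d.lt_len_of_mem_Bg hm
  have h2 : j < d.len := lt_of_le_of_lt hjm h3
  rw [Bg, dif_pos h1] at hi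
  rw [Bg, dif_pos h3] at hm
  rw [Bg, dif_pos h2]
  exact d.consecutive v ⟨i, h1⟩ ⟨j, h2⟩ ⟨m, h3⟩ hij hjm hi hm

lemma exists_mem_Bg (v : V) : ∃ i, v ∈ d.Bg i := by
  obtain ⟨i, hi⟩ := d.mem_bag v
  refine ⟨i.1, ?_⟩
  rw [Bg, dif_pos i.2]
  simpa using hi

/-- First bag index containing `v`. -/
noncomputable def fI (v : V) : ℕ := Nat.find (d.exists_mem_Bg v)

/-- Last bag index containing `v`. -/
noncomputable def gI (v : V) : ℕ := Nat.findGreatest (fun i => v ∈ d.Bg i) d.len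

lemma mem_fI (v : V) : v ∈ d.Bg (d.fI v) := Nat.find_spec (d.exists_mem_Bg v)

lemma fI_le {v : V} {i : ℕ} (h : v ∈ d.Bg i) : d.fI v ≤ i :=
  Nat.find_min' (d.exists_mem_Bg v) h

lemma le_gI {v : V} {i : ℕ} (h : v ∈ d.Bg i) : i ≤ d.gI v :=
  Nat.le_findGreatest (le_of_lt (d.lt_len_of_mem_Bg h)) h

lemma mem_gI (v : V) : v ∈ d.Bg (d.gI v) :=
  Nat.findGreatest_spec (P := fun i => v ∈ d.Bg i)
    (le_of_lt (d.lt_len_of_mem_Bg (d.mem_fI v))) (d.mem_fI v)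

lemma mem_of_between {v : V} {i : ℕ} (h1 : d.fI v ≤ i) (h2 : i ≤ d.gI v) : v ∈ d.Bg i :=
  d.mem_Bg_consec h1 h2 (d.mem_fI v) (d.mem_gI v)

lemma gI_lt_len (v : V) : d.gI v < d.len := d.lt_len_of_mem_Bg (d.mem_gI v)

lemma adj_overlap {u v : V} (h : G.Adj u v) : ∃ i, u ∈ d.Bg i ∧ v ∈ d.Bg i := by
  obtain ⟨i, hi1, hi2⟩ := d.edge_mem h
  refine ⟨i.1, ?_, ?_⟩ <;> rw [Bg, dif_pos i.2]
  · simpa using hi1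
  · simpa using hi2

/-- If `u ~ v` then `v`'s interval starts no later than `u`'s ends. -/
lemma fI_le_gI_of_adj {u v : V} (h : G.Adj u v) : d.fI v ≤ d.gI u := by
  obtain ⟨i, hu, hv⟩ := d.adj_overlap h
  exact le_trans (d.fI_le hv) (d.le_gI hu)

variable (R : V → Prop)

/-- The part of bag `j` still in play. -/
noncomputable def SB (j : ℕ) : Finset V := (d.Bg j).filter R

lemma SB_subset {j : ℕ} : d.SB R j ⊆ d.Bg j := Finset.filter_subset _ _

lemma SB_empty {j : ℕ} (h : d.len ≤ j) : d.SB R j = ∅ := by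
  rw [SB, d.Bg_empty h]; rfl

lemma mem_SB {v : V} {j : ℕ} : v ∈ d.SB R j ↔ v ∈ d.Bg j ∧ R v := Finset.mem_filter

/-- There remains a nonempty bag at index `≥ i`. -/
abbrev ExQ (i : ℕ) : Prop := ∃ j, i ≤ j ∧ (d.SB R j).Nonempty

/-- The greedy pick at state `i`: an element of maximal `gI` in the first
nonempty remaining bag at index `≥ i`. -/
noncomputable def pk {i : ℕ} (h : d.ExQ R i) : V :=
  Classical.choose (Finset.exists_max_image (d.SB R (Nat.find h)) d.gI (Nat.find_spec h).2)

lemma pk_mem {i : ℕ} (h : d.ExQ R i) : d.pk R h ∈ d.SB R (Nat.find h) :=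
  (Classical.choose_spec
    (Finset.exists_max_image (d.SB R (Nat.find h)) d.gI (Nat.find_spec h).2)).1

lemma pk_max {i : ℕ} (h : d.ExQ R i) :
    ∀ u ∈ d.SB R (Nat.find h), d.gI u ≤ d.gI (d.pk R h) :=
  (Classical.choose_spec
    (Finset.exists_max_image (d.SB R (Nat.find h)) d.gI (Nat.find_spec h).2)).2

/-- Start position of the `m`-th greedy step. -/
noncomputable def sp : ℕ → ℕ
  | 0 => 0
  | m + 1 => if h : d.ExQ R (sp m) then d.gI (d.pk R h) + 1 else d.len

/-- The `m`-th greedy step is active. -/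
abbrev act (m : ℕ) : Prop := d.ExQ R (d.sp R m)

/-- The `m`-th chain vertex. -/
noncomputable def tv {m : ℕ} (h : d.act R m) : V := d.pk R h

/-- The bag index at which the `m`-th chain vertex is picked. -/
noncomputable def jp {m : ℕ} (h : d.act R m) : ℕ := Nat.find h

lemma sp_le_jp {m : ℕ} (h : d.act R m) : d.sp R m ≤ d.jp R h := (Nat.find_spec h).1

lemma tv_mem_SB {m : ℕ} (h : d.act R m) : d.tv R h ∈ d.SB R (d.jp R h) := d.pk_mem R h

lemma tv_mem_Bg {m : ℕ} (h : d.act R m) : d.tv R h ∈ d.Bg (d.jp R h) :=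
  d.SB_subset R (d.tv_mem_SB R h)

lemma tv_R {m : ℕ} (h : d.act R m) : R (d.tv R h) := ((d.mem_SB R).mp (d.tv_mem_SB R h)).2

lemma tv_max {m : ℕ} (h : d.act R m) :
    ∀ u ∈ d.SB R (d.jp R h), d.gI u ≤ d.gI (d.tv R h) := d.pk_max R h

lemma jp_le_gI_tv {m : ℕ} (h : d.act R m) : d.jp R h ≤ d.gI (d.tv R h) :=
  d.le_gI (d.tv_mem_Bg R h)

lemma jp_le {m j : ℕ} (h : d.act R m) (hj : d.sp R m ≤ j) (hne : (d.SB R j).Nonempty) :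
    d.jp R h ≤ j := Nat.find_min' h ⟨hj, hne⟩

lemma sp_succ_of_act {m : ℕ} (h : d.act R m) :
    d.sp R (m + 1) = d.gI (d.tv R h) + 1 := by
  show (if h' : d.ExQ R (d.sp R m) then d.gI (d.pk R h') + 1 else d.len) = _
  rw [dif_pos h]
  rfl

lemma sp_succ_of_not_act {m : ℕ} (h : ¬ d.act R m) : d.sp R (m + 1) = d.len := by
  show (if h' : d.ExQ R (d.sp R m) then d.gI (d.pk R h') + 1 else d.len) = _
  rw [dif_neg h]

lemma sp_le_len : ∀ m, d.sp R m ≤ d.len := by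
  intro m
  cases m with
  | zero => exact Nat.zero_le _
  | succ m =>
    by_cases h : d.act R m
    · rw [d.sp_succ_of_act R h]
      exact Nat.succ_le_of_lt (d.gI_lt_len _)
    · rw [d.sp_succ_of_not_act R h]

lemma not_act_of_ge {m : ℕ} (h : d.len ≤ d.sp R m) : ¬ d.act R m := by
  rintro ⟨j, hj1, hj2⟩
  rw [d.SB_empty R (le_trans h hj1)] at hj2
  exact Finset.not_nonempty_empty hj2

lemma act_of_succ {m : ℕ} (h : d.act R (m + 1)) : d.act R m := by
  by_contra hc
  exact d.not_act_of_ge R (le_of_eq (d.sp_succ_of_not_act R hc).symm) h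

lemma act_mono {m m' : ℕ} (hmm : m ≤ m') (h : d.act R m') : d.act R m := by
  induction m' with
  | zero => exact Nat.le_zero.mp hmm ▸ h
  | succ n ih =>
    rcases Nat.lt_or_ge m (n + 1) with hlt | hge
    · exact ih (Nat.lt_succ_iff.mp hlt) (d.act_of_succ R h)
    · exact (Nat.le_antisymm hmm hge) ▸ h

lemma sp_le_succ (m : ℕ) : d.sp R m ≤ d.sp R (m + 1) := by
  by_cases h : d.act R m
  · rw [d.sp_succ_of_act R h]
    have h1 : d.sp R m ≤ d.jp R h := d.sp_le_jp R h
    have h2 := d.jp_le_gI_tv R h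
    omega
  · rw [d.sp_succ_of_not_act R h]
    exact d.sp_le_len R m

lemma sp_mono {m m' : ℕ} (h : m ≤ m') : d.sp R m ≤ d.sp R m' := by
  induction m' with
  | zero => exact Nat.le_zero.mp h ▸ le_refl _
  | succ n ih =>
    rcases Nat.lt_or_ge m (n + 1) with hlt | hge
    · exact le_trans (ih (Nat.lt_succ_iff.mp hlt)) (d.sp_le_succ R n)
    · exact (Nat.le_antisymm h hge) ▸ le_refl _

lemma gI_tv_lt {m m' : ℕ} (hlt : m < m') (h : d.act R m) (h' : d.act R m') :
    d.gI (d.tv R h) < d.gI (d.tv R h') := by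
  have h1 : d.sp R (m + 1) = d.gI (d.tv R h) + 1 := d.sp_succ_of_act R h
  have h2 : d.sp R (m + 1) ≤ d.sp R m' := d.sp_mono R hlt
  have h3 : d.sp R m' ≤ d.jp R h' := d.sp_le_jp R h'
  have h4 : d.jp R h' ≤ d.gI (d.tv R h') := d.jp_le_gI_tv R h'
  omega

lemma m_le_sp {m : ℕ} (h : d.act R m) : m ≤ d.sp R m := by
  induction m with
  | zero => exact Nat.zero_le _
  | succ n ih =>
    have hn : d.act R n := d.act_of_succ R h
    have h1 := ih hn
    have h2 : d.sp R (n + 1) = d.gI (d.tv R hn) + 1 := d.sp_succ_of_act R hn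
    have h3 : d.sp R n ≤ d.jp R hn := d.sp_le_jp R hn
    have h4 := d.jp_le_gI_tv R hn
    omega

/-- Separation: chain members two or more steps apart have disjoint intervals. -/
lemma chain_sep {m m' : ℕ} (hmm : m + 2 ≤ m') (h : d.act R m) (h' : d.act R m') :
    d.gI (d.tv R h) < d.fI (d.tv R h') := by
  by_contra hc
  push_neg at hc
  have h1 : d.act R (m + 1) := d.act_mono R (by omega) h'
  set i := d.jp R h1 with hi
  have hsp : d.sp R (m + 1) = d.gI (d.tv R h) + 1 := d.sp_succ_of_act R h
  have hspi : d.sp R (m + 1) ≤ i := d.sp_le_jp R h1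
  have hfle : d.fI (d.tv R h') ≤ i := by omega
  have hglt : d.gI (d.tv R h1) < d.gI (d.tv R h') := d.gI_tv_lt R (by omega) h1 h'
  have hile : i ≤ d.gI (d.tv R h') :=
    le_trans (d.jp_le_gI_tv R h1) (le_of_lt hglt)
  have hmem : d.tv R h' ∈ d.SB R i :=
    (d.mem_SB R).mpr ⟨d.mem_of_between hfle hile, d.tv_R R h'⟩
  exact absurd (d.tv_max R h1 _ hmem) (not_le.mpr hglt)

/-- Coverage: every nonempty remaining bag contains a chain member. -/
lemma chain_cover {i : ℕ} (hne : (d.SB R i).Nonempty) :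
    ∃ m, ∃ h : d.act R m, d.sp R m ≤ i ∧ d.jp R h ≤ i ∧ i ≤ d.gI (d.tv R h) := by
  have hP0 : d.act R 0 ∧ d.sp R 0 ≤ i := ⟨⟨i, Nat.zero_le _, hne⟩, Nat.zero_le _⟩
  have hspec : d.act R (Nat.findGreatest (fun m => d.act R m ∧ d.sp R m ≤ i) i) ∧
      d.sp R (Nat.findGreatest (fun m => d.act R m ∧ d.sp R m ≤ i) i) ≤ i :=
    Nat.findGreatest_spec (P := fun m => d.act R m ∧ d.sp R m ≤ i) (Nat.zero_le i) hP0
  obtain ⟨hact, hsp⟩ := hspec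
  by_cases hc : i ≤ d.gI (d.tv R hact)
  · exact ⟨_, hact, hsp, d.jp_le R hact hsp hne, hc⟩
  · exfalso
    push_neg at hc
    have hsucc : d.sp R (Nat.findGreatest (fun m => d.act R m ∧ d.sp R m ≤ i) i + 1) ≤ i := by
      rw [d.sp_succ_of_act R hact]; omega
    have hact1 : d.act R (Nat.findGreatest (fun m => d.act R m ∧ d.sp R m ≤ i) i + 1) :=
      ⟨i, hsucc, hne⟩
    exact Nat.findGreatest_is_greatest (Nat.lt_succ_self _)
      (le_trans (d.m_le_sp R hact1) hsucc) ⟨hact1, hsucc⟩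

/-- `v` gets picked by the chain on `R`. -/
abbrev pkd (v : V) : Prop := ∃ m, ∃ h : d.act R m, d.tv R h = v

/-- The remaining vertex sets, level by level. -/
noncomputable def Rl : ℕ → V → Prop
  | 0 => fun _ => True
  | l + 1 => fun v => Rl l v ∧ ¬ d.pkd (Rl l) v

lemma Rl_antitone {l l' : ℕ} (h : l ≤ l') {v : V} (hv : d.Rl l' v) : d.Rl l v := by
  induction l' with
  | zero => exact Nat.le_zero.mp h ▸ hv
  | succ n ih =>
    rcases Nat.lt_or_ge l (n + 1) with hlt | hge
    · exact ih (Nat.lt_succ_iff.mp hlt) hv.1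
    · exact (Nat.le_antisymm h hge) ▸ hv

lemma card_SB_Rl {k : ℕ} (hw : ∀ i, (d.bag i).card ≤ k + 1) :
    ∀ l i, (d.SB (d.Rl l) i).card ≤ k + 1 - l := by
  intro l
  induction l with
  | zero =>
    intro i
    refine le_trans (Finset.card_le_card (d.SB_subset _)) ?_
    rw [Bg]
    split
    · next h => simpa using hw ⟨i, h⟩
    · simp
  | succ n ih =>
    intro i
    by_cases hne : (d.SB (d.Rl n) i).Nonempty
    · obtain ⟨m, h, _, hjp, hgi⟩ := d.chain_cover (d.Rl n) hne
      set t := d.tv (d.Rl n) h with ht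
      have htmem : t ∈ d.SB (d.Rl n) i := by
        refine (d.mem_SB _).mpr ⟨?_, d.tv_R _ h⟩
        exact d.mem_of_between (le_trans (d.fI_le (d.tv_mem_Bg _ h)) hjp) hgi
      have hsub : d.SB (d.Rl (n + 1)) i ⊆ (d.SB (d.Rl n) i).erase t := by
        intro u hu
        have hub := ((d.mem_SB _).mp hu).1
        have hrl : d.Rl (n + 1) u := ((d.mem_SB _).mp hu).2
        refine Finset.mem_erase.mpr ⟨?_, (d.mem_SB _).mpr ⟨hub, hrl.1⟩⟩
        rintro rfl
        exact hrl.2 ⟨m, h, rfl⟩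
      calc (d.SB (d.Rl (n + 1)) i).card ≤ ((d.SB (d.Rl n) i).erase t).card :=
              Finset.card_le_card hsub
        _ = (d.SB (d.Rl n) i).card - 1 := Finset.card_erase_of_mem htmem
        _ ≤ (k + 1 - n) - 1 := by have := ih i; omega
        _ = k + 1 - (n + 1) := by omega
    · have : d.SB (d.Rl (n + 1)) i ⊆ d.SB (d.Rl n) i := by
        intro u hu
        have h1 := (d.mem_SB _).mp hu
        exact (d.mem_SB _).mpr ⟨h1.1, h1.2.1⟩
      rw [Finset.not_nonempty_iff_eq_empty] at hne
      have := Finset.card_le_card this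
      rw [hne] at this
      simpa using le_trans this (Nat.zero_le _)

variable (k : ℕ)

/-- The level of a vertex: the chain that picks it, or `k` if it survives. -/
noncomputable def lvl (v : V) : ℕ :=
  if h : ∃ l, l < k ∧ d.pkd (d.Rl l) v then Nat.find h else k

/-- The index of a vertex within its chain. -/
noncomputable def idx (v : V) : ℕ :=
  if h : ∃ m, ∃ hh : d.act (d.Rl (d.lvl k v)) m, d.tv (d.Rl (d.lvl k v)) hh = v
  then Nat.find h else 0

lemma lvl_le (v : V) : d.lvl k v ≤ k := by
  rw [lvl]
  split
  · next h => exact le_of_lt (Nat.find_spec h).1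
  · exact le_refl _

lemma Rl_lvl (v : V) : ∀ l, l ≤ d.lvl k v → d.Rl l v := by
  intro l
  induction l with
  | zero => exact fun _ => trivial
  | succ n ih =>
    intro hle
    refine ⟨ih (by omega), ?_⟩
    intro hpkd
    have hnk : n < k := lt_of_lt_of_le (lt_of_lt_of_le (Nat.lt_succ_self n) hle) (d.lvl_le k v)
    have hex : ∃ l, l < k ∧ d.pkd (d.Rl l) v := ⟨n, hnk, hpkd⟩
    have : d.lvl k v ≤ n := by
      rw [lvl, dif_pos hex]
      exact Nat.find_min' hex ⟨hnk, hpkd⟩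
    omega

lemma pkd_lvl {v : V} (h : d.lvl k v < k) : d.pkd (d.Rl (d.lvl k v)) v := by
  rw [lvl] at h ⊢
  split at h
  · next hex =>
    rw [dif_pos hex]
    exact (Nat.find_spec hex).2
  · omega

lemma idx_spec {v : V} (h : d.lvl k v < k) :
    ∃ hh : d.act (d.Rl (d.lvl k v)) (d.idx k v), d.tv (d.Rl (d.lvl k v)) hh = v := by
  obtain ⟨m, hm, heq⟩ := d.pkd_lvl k h
  have hex : ∃ m, ∃ hh : d.act (d.Rl (d.lvl k v)) m, d.tv (d.Rl (d.lvl k v)) hh = v :=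
    ⟨m, hm, heq⟩
  rw [idx, dif_pos hex]
  exact Nat.find_spec hex

lemma tv_congr (R : V → Prop) {m m' : ℕ} (e : m = m') (h : d.act R m) (h' : d.act R m') :
    d.tv R h = d.tv R h' := by subst e; rfl

lemma picked_at {v : V} {l : ℕ} (hv : d.lvl k v = l) (hl : l < k) :
    ∃ hh : d.act (d.Rl l) (d.idx k v), d.tv (d.Rl l) hh = v := by
  subst hv
  exact d.idx_spec k hl

lemma idx_inj {u v : V} {l : ℕ} (hl : l < k) (hu : d.lvl k u = l) (hv : d.lvl k v = l)
    (hidx : d.idx k u = d.idx k v) : u = v := by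
  obtain ⟨hhu, hequ⟩ := d.picked_at k hu hl
  obtain ⟨hhv, heqv⟩ := d.picked_at k hv hl
  rw [← hequ, ← heqv]
  exact d.tv_congr (d.Rl l) hidx hhu hhv

/-- Adjacent same-level chain vertices are at most one step apart. -/
lemma chain_adj_close {u v : V} {l : ℕ} (hl : l < k) (hu : d.lvl k u = l)
    (hv : d.lvl k v = l) (hadj : G.Adj u v) : ¬ (d.idx k u + 2 ≤ d.idx k v) := by
  intro hc
  obtain ⟨hhu, hequ⟩ := d.picked_at k hu hl
  obtain ⟨hhv, heqv⟩ := d.picked_at k hv hl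
  have := d.chain_sep (d.Rl l) hc hhu hhv
  rw [hequ, heqv] at this
  exact absurd (d.fI_le_gI_of_adj hadj) (not_le.mpr this)

/-- Key lemma: a vertex of higher level adjacent to two same-level chain
vertices forces them to be at most two steps apart. -/
lemma bridge {u v w : V} {l : ℕ} (hl : l < k) (hu : d.lvl k u = l) (hv : d.lvl k v = l)
    (hw : l < d.lvl k w) (h1 : G.Adj w u) (h2 : G.Adj w v) :
    ¬ (d.idx k u + 3 ≤ d.idx k v) := by
  intro hc
  obtain ⟨hhu, hequ⟩ := d.picked_at k hu hl
  obtain ⟨hhv, heqv⟩ := d.picked_at k hv hl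
  set m := d.idx k u
  set m' := d.idx k v
  have hwR : d.Rl l w := d.Rl_lvl k w l (le_of_lt hw)
  have hact1 : d.act (d.Rl l) (m + 1) := d.act_mono (d.Rl l) (by omega) hhv
  set i := d.jp (d.Rl l) hact1 with hi
  have hsp : d.sp (d.Rl l) (m + 1) = d.gI (d.tv (d.Rl l) hhu) + 1 :=
    d.sp_succ_of_act (d.Rl l) hhu
  have hspi : d.sp (d.Rl l) (m + 1) ≤ i := d.sp_le_jp (d.Rl l) hact1
  -- w starts no later than gI u < i
  have hfw : d.fI w ≤ d.gI u := d.fI_le_gI_of_adj h1.symm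
  have hfwi : d.fI w ≤ i := by rw [hequ] at hsp; omega
  -- w ends at least at fI v > gI (t_{m+1}) ≥ i
  have hsep : d.gI (d.tv (d.Rl l) hact1) < d.fI (d.tv (d.Rl l) hhv) :=
    d.chain_sep (d.Rl l) (by omega) hact1 hhv
  have hfv : d.fI v ≤ d.gI w := d.fI_le_gI_of_adj h2
  have hjpgi : i ≤ d.gI (d.tv (d.Rl l) hact1) := d.jp_le_gI_tv (d.Rl l) hact1
  have hgw : d.gI (d.tv (d.Rl l) hact1) < d.gI w := by rw [heqv] at hsep; omega
  have hiw : i ≤ d.gI w := by omega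
  have hmem : w ∈ d.SB (d.Rl l) i :=
    (d.mem_SB _).mpr ⟨d.mem_of_between hfwi hiw, hwR⟩
  exact absurd (d.tv_max (d.Rl l) hact1 _ hmem) (not_le.mpr hgw)

/-- Level-`k` vertices form an independent set. -/
lemma top_indep (hw : ∀ i, (d.bag i).card ≤ k + 1) {u v : V} (hu : d.lvl k u = k)
    (hv : d.lvl k v = k) (hne : u ≠ v) : ¬ G.Adj u v := by
  intro hadj
  obtain ⟨i, hui, hvi⟩ := d.adj_overlap hadj
  have huR : d.Rl k u := d.Rl_lvl k u k (le_of_eq hu.symm)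
  have hvR : d.Rl k v := d.Rl_lvl k v k (le_of_eq hv.symm)
  have huS : u ∈ d.SB (d.Rl k) i := (d.mem_SB _).mpr ⟨hui, huR⟩
  have hvS : v ∈ d.SB (d.Rl k) i := (d.mem_SB _).mpr ⟨hvi, hvR⟩
  have hcard : 2 ≤ (d.SB (d.Rl k) i).card := Finset.one_lt_card.mpr ⟨u, huS, v, hvS, hne⟩
  have := d.card_SB_Rl hw k i
  omega

/-- The colouring (as a natural number). -/
noncomputable def col (v : V) : ℕ :=
  if d.lvl k v < k then 3 * d.lvl k v + d.idx k v % 3 else 3 * k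

lemma col_lt (v : V) : d.col k v < 3 * k + 1 := by
  rw [col]
  split
  · next h =>
    have : d.idx k v % 3 < 3 := Nat.mod_lt _ (by norm_num)
    omega
  · omega

lemma col_decode {u v : V} (h : d.col k u = d.col k v) :
    d.lvl k u = d.lvl k v ∧ (d.lvl k u < k → d.idx k u % 3 = d.idx k v % 3) := by
  rw [col, col] at h
  have hmu : d.idx k u % 3 < 3 := Nat.mod_lt _ (by norm_num)
  have hmv : d.idx k v % 3 < 3 := Nat.mod_lt _ (by norm_num)
  have hlu := d.lvl_le k u
  have hlv := d.lvl_le k v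
  by_cases h1 : d.lvl k u < k <;> by_cases h2 : d.lvl k v < k
  · rw [if_pos h1, if_pos h2] at h
    exact ⟨by omega, fun _ => by omega⟩
  · rw [if_pos h1, if_neg h2] at h
    exact ⟨by omega, fun _ => by omega⟩
  · rw [if_neg h1, if_pos h2] at h
    exact ⟨by omega, fun _ => by omega⟩
  · rw [if_neg h1, if_neg h2] at h
    exact ⟨by omega, fun hc => by omega⟩

/-- The colouring is proper. -/
lemma col_proper (hw : ∀ i, (d.bag i).card ≤ k + 1) {u v : V} (hadj : G.Adj u v) :
    d.col k u ≠ d.col k v := by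
  intro h
  obtain ⟨hlvl, hmod⟩ := d.col_decode k h
  by_cases hl : d.lvl k u < k
  · have h1 := d.chain_adj_close k hl rfl hlvl.symm hadj
    have h2 := d.chain_adj_close k hl hlvl.symm rfl hadj.symm
    have hne : d.idx k u ≠ d.idx k v := by
      intro he
      exact hadj.ne (d.idx_inj k hl rfl hlvl.symm he)
    have := hmod hl
    omega
  · have hk : d.lvl k u = k := Nat.le_antisymm (d.lvl_le k u) (not_lt.mp hl)
    exact d.top_indep k hw hk (hlvl.symm.trans hk) hadj.ne hadj

/-- The key star property: no 2-coloured path on 4 vertices. -/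
lemma col_star (hw : ∀ i, (d.bag i).card ≤ k + 1) {x0 x1 x2 x3 : V}
    (e01 : G.Adj x0 x1) (e12 : G.Adj x1 x2) (e23 : G.Adj x2 x3)
    (h02 : x0 ≠ x2) (h13 : x1 ≠ x3)
    (c02 : d.col k x0 = d.col k x2) (c13 : d.col k x1 = d.col k x3) : False := by
  obtain ⟨l02, m02⟩ := d.col_decode k c02
  obtain ⟨l13, m13⟩ := d.col_decode k c13
  rcases lt_trichotomy (d.lvl k x0) (d.lvl k x1) with hlt | heq | hgt
  · -- bridge x1 over the pair (x0, x2)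
    have hl : d.lvl k x0 < k := lt_of_lt_of_le hlt (d.lvl_le k x1)
    have hb1 := d.bridge k hl rfl l02.symm hlt e01.symm e12
    have hb2 := d.bridge k hl l02.symm rfl hlt e12 e01.symm
    have hne : d.idx k x0 ≠ d.idx k x2 := fun he => h02 (d.idx_inj k hl rfl l02.symm he)
    have := m02 hl
    omega
  · by_cases hl : d.lvl k x0 < k
    · have a1 := d.chain_adj_close k hl rfl heq.symm e01
      have a2 := d.chain_adj_close k hl heq.symm rfl e01.symm
      have a3 := d.chain_adj_close k hl heq.symm l02.symm e12
      have a4 := d.chain_adj_close k hl l02.symm heq.symm e12.symm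
      have hne : d.idx k x0 ≠ d.idx k x2 := fun he => h02 (d.idx_inj k hl rfl l02.symm he)
      have := m02 hl
      omega
    · have hk0 : d.lvl k x0 = k := Nat.le_antisymm (d.lvl_le k x0) (not_lt.mp hl)
      exact d.top_indep k hw hk0 (heq.symm.trans hk0) e01.ne e01
  · -- bridge x2 over the pair (x1, x3)
    have hl : d.lvl k x1 < k := lt_of_lt_of_le hgt (d.lvl_le k x0)
    have hw2 : d.lvl k x1 < d.lvl k x2 := lt_of_lt_of_eq hgt l02
    have hb1 := d.bridge k hl rfl l13.symm hw2 e12.symm e23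
    have hb2 := d.bridge k hl l13.symm rfl hw2 e23 e12.symm
    have hne : d.idx k x1 ≠ d.idx k x3 := fun he => h13 (d.idx_inj k hl rfl l13.symm he)
    have := m13 hl
    omega

end PathDecomp

end PWProof

/-- For every graph `G` with pathwidth `k`, `χ_st(G) ≤ 3k + 1`. -/
theorem star_le_of_pathwidth {V : Type*} (G : SimpleGraph V) (k : ℕ)
    (hpw : HasPathwidthLE G k) :
    ∃ φ : V → Fin (3 * k + 1), StarColouring G φ := by
  obtain ⟨d, hw⟩ := hpw
  refine ⟨fun v => ⟨d.col k v, d.col_lt k v⟩, ?_, ?_⟩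
  · intro u v hadj h
    exact d.col_proper k hw hadj (congrArg Fin.val h)
  · intro u v p hp hlen
    rintro ⟨a, b, hab⟩
    have hplen : p.length = 3 := by
      have := p.length_support
      omega
    match p, hplen with
    | .cons (v := x1) e01 (.cons (v := x2) e12 (.cons (v := x3) e23 .nil)), _ =>
      simp only [SimpleGraph.Walk.support_cons, SimpleGraph.Walk.support_nil,
        List.mem_cons, List.mem_singleton, forall_eq_or_imp, forall_eq] at hab
      have hnodup := hp.support_nodup
      simp only [SimpleGraph.Walk.support_cons, SimpleGraph.Walk.support_nil,
        List.nodup_cons, List.mem_cons, List.mem_singleton, List.not_mem_nil,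
        not_or] at hnodup
      have h02 : u ≠ x2 := hnodup.1.2.1
      have h13 : x1 ≠ x3 := hnodup.2.1.2.1
      -- derive equal colours on alternating vertices
      have prop01 : d.col k u ≠ d.col k x1 := d.col_proper k hw e01
      have prop12 : d.col k x1 ≠ d.col k x2 := d.col_proper k hw e12
      have prop23 : d.col k x2 ≠ d.col k x3 := d.col_proper k hw e23
      obtain ⟨ha0, ha1, ha2, ha3⟩ := hab
      have hv : ∀ {x y : V},
          (⟨d.col k x, d.col_lt k x⟩ : Fin (3 * k + 1)) =
            (⟨d.col k y, d.col_lt k y⟩ : Fin (3 * k + 1)) → d.col k x = d.col k y := by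
        intro x y h
        exact congrArg Fin.val h
      have c02 : d.col k u = d.col k x2 := by
        rcases ha0 with h0 | h0 <;> rcases ha1 with h1 | h1 <;> rcases ha2 with h2 | h2 <;>
          first
            | (exact hv (h0.trans h2.symm))
            | (exact absurd (hv (h0.trans h1.symm)) prop01)
            | (exact absurd (hv (h1.trans h2.symm)) prop12)
      have c13 : d.col k x1 = d.col k x3 := by
        rcases ha1 with h1 | h1 <;> rcases ha2 with h2 | h2 <;> rcases ha3 with h3 | h3 <;>
          first
            | (exact hv (h1.trans h3.symm))
            | (exact absurd (hv (h1.trans h2.symm)) prop12)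
            | (exact absurd (hv (h2.trans h3.symm)) prop23)
      exact d.col_star k hw e01 e12 e23 h02 h13 c02 c13
end

section
/- Fix ε > 0, let w := (1+ε)^{-1/2}, and let c ∈ ℕ satisfy 2^{2/c} ≤ 1+ε and w^c ≤ (ε/2)(1−w). Then for each q ≥ 1, the number of distinct c-spread sequences of length q is at most (1+ε)^q. -/
/-- A sequence `s` of positive integers of length `q` is `c`-spread if each entry equal
to `1` can be mapped (by a partial assignment `f`) to an entry greater than `1`, such
that every entry `s i ≥ 2` has at least `⌈c log₂ (s i)⌉` entries, either all
immediately before it or all immediately after it, that equal `1` and are mapped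
to it. -/
def CSpread (c : ℕ) {q : ℕ} (s : Fin q → ℕ) : Prop :=
  (∀ i, 1 ≤ s i) ∧ ∃ f : Fin q → Option (Fin q),
    (∀ i j, f i = some j → s i = 1 ∧ 2 ≤ s j) ∧
    ∀ i : Fin q, 2 ≤ s i →
      ((⌈(c : ℝ) * Real.logb 2 (s i)⌉₊ ≤ (i : ℕ) ∧
        ∀ j : Fin q, (i : ℕ) - ⌈(c : ℝ) * Real.logb 2 (s i)⌉₊ ≤ (j : ℕ) → (j : ℕ) < (i : ℕ) →
          s j = 1 ∧ f j = some i) ∨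
       ((i : ℕ) + ⌈(c : ℝ) * Real.logb 2 (s i)⌉₊ < q ∧
        ∀ j : Fin q, (i : ℕ) < (j : ℕ) → (j : ℕ) ≤ (i : ℕ) + ⌈(c : ℝ) * Real.logb 2 (s i)⌉₊ →
          s j = 1 ∧ f j = some i))

noncomputable def mmv (c v : ℕ) : ℕ := ⌈(c : ℝ) * Real.logb 2 v⌉₊

lemma one_le_logb {v : ℕ} (h2 : 2 ≤ v) : 1 ≤ Real.logb 2 v := by
  have : Real.logb 2 2 ≤ Real.logb 2 v :=
    Real.logb_le_logb_of_le (by norm_num) (by norm_num) (by exact_mod_cast h2)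
  rwa [Real.logb_self_eq_one (by norm_num)] at this

lemma logb_nonneg' {v : ℕ} (h1 : 1 ≤ v) : 0 ≤ Real.logb 2 v :=
  Real.logb_nonneg (by norm_num) (by exact_mod_cast h1)

lemma mm_ge_c {c v : ℕ} (h2 : 2 ≤ v) : c ≤ mmv c v := by
  have h1 : (c : ℝ) * 1 ≤ (c : ℝ) * Real.logb 2 v :=
    mul_le_mul_of_nonneg_left (one_le_logb h2) (by positivity)
  calc c = ⌈(c : ℝ)⌉₊ := (Nat.ceil_natCast c).symm
    _ ≤ mmv c v := Nat.ceil_le_ceil (by simpa using h1)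

lemma v_le_pow {c v q : ℕ} (hc : 1 ≤ c) (h2 : 2 ≤ v) (h : mmv c v ≤ q) : v ≤ 2 ^ q := by
  have h0 : (c : ℝ) * Real.logb 2 v ≤ q := by
    calc (c : ℝ) * Real.logb 2 v ≤ (⌈(c : ℝ) * Real.logb 2 v⌉₊ : ℝ) := Nat.le_ceil _
      _ ≤ q := by exact_mod_cast h
  have hl : Real.logb 2 v ≤ q := by
    have := logb_nonneg' (le_trans (by norm_num) h2)
    nlinarith [show (1:ℝ) ≤ c by exact_mod_cast hc]
  have hx : (v : ℝ) ≤ (2 : ℝ) ^ (q : ℝ) :=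
    (Real.logb_le_iff_le_rpow (by norm_num) (by positivity : (0:ℝ) < (v:ℝ))).mp hl
  rw [Real.rpow_natCast] at hx
  exact_mod_cast hx

lemma cspread_shift {c q : ℕ} (k : ℕ) (hk : k ≤ q) (s : Fin q → ℕ)
    (h1 : ∀ i, 1 ≤ s i)
    (f : Fin q → Option (Fin q))
    (hf : ∀ i j, f i = some j → s i = 1 ∧ 2 ≤ s j)
    (hblk : ∀ i : Fin q, 2 ≤ s i → k ≤ (i : ℕ) →
      ((mmv c (s i) + k ≤ (i : ℕ) ∧ ∀ j : Fin q, (i : ℕ) - mmv c (s i) ≤ (j : ℕ) →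
          (j : ℕ) < (i : ℕ) → s j = 1 ∧ f j = some i) ∨
       ((i : ℕ) + mmv c (s i) < q ∧ ∀ j : Fin q, (i : ℕ) < (j : ℕ) →
          (j : ℕ) ≤ (i : ℕ) + mmv c (s i) → s j = 1 ∧ f j = some i))) :
    CSpread c (fun j : Fin (q - k) => s ⟨(j : ℕ) + k, by have := j.isLt; omega⟩) := by
  refine ⟨fun j => h1 _, ?_⟩
  refine ⟨fun j => (f ⟨(j : ℕ) + k, by have := j.isLt; omega⟩).bind
      (fun i => if h : k ≤ (i : ℕ) then some ⟨(i : ℕ) - k, by have := i.isLt; omega⟩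
        else none), ?_, ?_⟩
  · intro j i' hji
    dsimp only at hji ⊢
    rw [Option.bind_eq_some_iff] at hji
    obtain ⟨i, hfi, hd⟩ := hji
    split_ifs at hd with h
    · cases hd
      obtain ⟨hs1, hs2⟩ := hf _ _ hfi
      refine ⟨hs1, ?_⟩
      have hi : (⟨(i : ℕ) - k + k, by have := i.isLt; omega⟩ : Fin q) = i :=
        Fin.ext (show (i : ℕ) - k + k = (i : ℕ) by omega)
      rw [hi]; exact hs2
  · intro i' hbig
    dsimp only at hbig ⊢
    set I : Fin q := ⟨(i' : ℕ) + k, by have := i'.isLt; omega⟩ with hI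
    have hIc : (I : ℕ) = (i' : ℕ) + k := rfl
    set M := ⌈(c : ℝ) * Real.logb 2 (s I)⌉₊ with hMdef
    have hMm : M = mmv c (s I) := rfl
    rcases hblk I hbig (by omega) with ⟨hle, hall⟩ | ⟨hlt, hall⟩
    · rw [← hMm] at hle hall
      left
      have hi'lt := i'.isLt
      refine ⟨by omega, fun j' hj1 hj2 => ?_⟩
      have hj'lt := j'.isLt
      set J : Fin q := ⟨(j' : ℕ) + k, by omega⟩ with hJ
      obtain ⟨hs1, hfJ⟩ := hall J (by simp only [hJ, hIc]; omega) (by simp only [hJ, hIc]; omega)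
      refine ⟨hs1, ?_⟩
      rw [hfJ]
      rw [Option.bind_some, dif_pos (by omega : k ≤ (I : ℕ))]
      congr 1
      exact Fin.ext (show (I : ℕ) - k = (i' : ℕ) by omega)
    · rw [← hMm] at hlt hall
      right
      have hi'lt := i'.isLt
      refine ⟨by omega, fun j' hj1 hj2 => ?_⟩
      have hj'lt := j'.isLt
      set J : Fin q := ⟨(j' : ℕ) + k, by omega⟩ with hJ
      obtain ⟨hs1, hfJ⟩ := hall J (by simp only [hJ, hIc]; omega) (by simp only [hJ, hIc]; omega)
      refine ⟨hs1, ?_⟩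
      rw [hfJ]
      rw [Option.bind_some, dif_pos (by omega : k ≤ (I : ℕ))]
      congr 1
      exact Fin.ext (show (I : ℕ) - k = (i' : ℕ) by omega)

lemma sp_finite {c q : ℕ} (hc : 1 ≤ c) : ({s : Fin q → ℕ | CSpread c s}).Finite := by
  apply Set.Finite.subset
    (Set.Finite.pi (fun i : Fin q => Set.finite_Icc 1 (2 ^ q)))
  intro s hs
  obtain ⟨h1, f, hf, hblk⟩ := hs
  intro i _
  simp only [Set.mem_Icc]
  refine ⟨h1 i, ?_⟩
  by_cases hb : 2 ≤ s i
  · have hmq : mmv c (s i) ≤ q := by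
      rcases hblk i hb with ⟨hle, _⟩ | ⟨hlt, _⟩
      · exact le_trans hle (le_of_lt i.isLt)
      · have hlt' : (i : ℕ) + mmv c (s i) < q := hlt
        omega
    exact v_le_pow hc hb hmq
  · have := Nat.one_le_two_pow (n := q)
    omega

lemma ncard_biUnion_le {α β : Type*} (F : Finset α) (U : α → Set β)
    (h : ∀ a, (U a).Finite) :
    (⋃ a ∈ F, U a).ncard ≤ ∑ a ∈ F, (U a).ncard := by
  classical
  induction F using Finset.induction_on with
  | empty => simp
  | insert _ _ ha ih =>
    rename_i a s
    rw [Finset.set_biUnion_insert, Finset.sum_insert ha]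
    exact le_trans (Set.ncard_union_le _ _) (by omega)

noncomputable def gOne (q : ℕ) (t : Fin (q - 1) → ℕ) : Fin q → ℕ :=
  fun i => if h : 1 ≤ (i : ℕ) then t ⟨(i : ℕ) - 1, by have := i.isLt; omega⟩ else 1

noncomputable def gBig (c q v p : ℕ) (t : Fin (q - (mmv c v + 1)) → ℕ) : Fin q → ℕ :=
  fun i => if (i : ℕ) = p then v
    else if h : mmv c v + 1 ≤ (i : ℕ) then
      t ⟨(i : ℕ) - (mmv c v + 1), by have := i.isLt; omega⟩
    else 1

lemma sp_cover {c q : ℕ} (hc : 1 ≤ c) (hq : 1 ≤ q) :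
    {s : Fin q → ℕ | CSpread c s} ⊆
      gOne q '' {t : Fin (q - 1) → ℕ | CSpread c t} ∪
      ⋃ v ∈ (Finset.Icc 2 (2 ^ q)).filter (fun v => mmv c v + 1 ≤ q),
        (gBig c q v 0 '' {t : Fin (q - (mmv c v + 1)) → ℕ | CSpread c t} ∪
         gBig c q v (mmv c v) '' {t : Fin (q - (mmv c v + 1)) → ℕ | CSpread c t}) := by
  intro s hs
  obtain ⟨h1, f, hf, hblk⟩ := hs
  have hblk' : ∀ i : Fin q, 2 ≤ s i →
      ((mmv c (s i) ≤ (i : ℕ) ∧ ∀ j : Fin q, (i : ℕ) - mmv c (s i) ≤ (j : ℕ) →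
          (j : ℕ) < (i : ℕ) → s j = 1 ∧ f j = some i) ∨
       ((i : ℕ) + mmv c (s i) < q ∧ ∀ j : Fin q, (i : ℕ) < (j : ℕ) →
          (j : ℕ) ≤ (i : ℕ) + mmv c (s i) → s j = 1 ∧ f j = some i)) := hblk
  clear hblk
  have hi0lt : 0 < q := hq
  set i0 : Fin q := ⟨0, hi0lt⟩ with hi0def
  have hi0 : (i0 : ℕ) = 0 := rfl
  by_cases h0 : 2 ≤ s i0
  · -- big entry at position 0: right token
    have hMc : c ≤ mmv c (s i0) := mm_ge_c h0
    rcases hblk' i0 h0 with ⟨hle, _⟩ | ⟨hlt, hall⟩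
    · exfalso; rw [hi0] at hle; omega
    · rw [hi0] at hlt hall
      have hMq : mmv c (s i0) + 1 ≤ q := by omega
      right
      rw [Set.mem_iUnion₂]
      refine ⟨s i0, by
        simp only [Finset.mem_filter, Finset.mem_Icc]
        exact ⟨⟨h0, v_le_pow hc h0 (by omega)⟩, hMq⟩, ?_⟩
      left
      refine ⟨fun j : Fin (q - (mmv c (s i0) + 1)) =>
          s ⟨(j : ℕ) + (mmv c (s i0) + 1), by have := j.isLt; omega⟩, ?_, ?_⟩
      · refine cspread_shift _ hMq s h1 f hf ?_
        intro i hbig hki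
        rcases hblk' i hbig with ⟨hle2, hall2⟩ | ⟨hlt2, hall2⟩
        · by_cases hbc : mmv c (s i) + (mmv c (s i0) + 1) ≤ (i : ℕ)
          · exact Or.inl ⟨hbc, hall2⟩
          · exfalso
            have hMlt : mmv c (s i0) < q := by omega
            have h1' := hall2 ⟨mmv c (s i0), hMlt⟩ (by simp only [Fin.val_mk]; omega)
              (by simp only [Fin.val_mk]; omega)
            have h2' := hall ⟨mmv c (s i0), hMlt⟩ (by simp only [Fin.val_mk]; omega)
              (by simp only [Fin.val_mk]; omega)
            rw [h1'.2] at h2'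
            have : i = i0 := Option.some.inj h2'.2
            rw [this, hi0] at hki
            omega
        · exact Or.inr ⟨hlt2, hall2⟩
      · funext p
        simp only [gBig]
        split_ifs with hp1 hp2
        · have : p = i0 := Fin.ext (by rw [hi0, hp1])
          rw [this]
        · congr 1
          exact Fin.ext (by simp only [Fin.val_mk]; omega)
        · have hplt := p.isLt
          exact ((hall p (by omega) (by omega)).1).symm
  · -- s 0 = 1
    have hs0 : s i0 = 1 := by have := h1 i0; omega
    by_cases hQ : ∃ i : Fin q, 2 ≤ s i ∧ (i : ℕ) = mmv c (s i) ∧ 0 < (i : ℕ) ∧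
        ∀ j : Fin q, (j : ℕ) < (i : ℕ) → s j = 1 ∧ f j = some i
    · -- left token covering position 0
      obtain ⟨i, hbig0, hiM, hipos, hallQ⟩ := hQ
      have hilt := i.isLt
      have hMq : mmv c (s i) + 1 ≤ q := by omega
      right
      rw [Set.mem_iUnion₂]
      refine ⟨s i, by
        simp only [Finset.mem_filter, Finset.mem_Icc]
        exact ⟨⟨hbig0, v_le_pow hc hbig0 (by omega)⟩, hMq⟩, ?_⟩
      right
      refine ⟨fun j : Fin (q - (mmv c (s i) + 1)) =>
          s ⟨(j : ℕ) + (mmv c (s i) + 1), by have := j.isLt; omega⟩, ?_, ?_⟩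
      · refine cspread_shift _ hMq s h1 f hf ?_
        intro i'' hbig hki
        rcases hblk' i'' hbig with ⟨hle2, hall2⟩ | ⟨hlt2, hall2⟩
        · by_cases hbc : mmv c (s i'') + (mmv c (s i) + 1) ≤ (i'' : ℕ)
          · exact Or.inl ⟨hbc, hall2⟩
          · exfalso
            have h1' := hall2 i (by omega) (by omega)
            rw [h1'.1] at hbig0
            omega
        · exact Or.inr ⟨hlt2, hall2⟩
      · funext p
        simp only [gBig]
        split_ifs with hp1 hp2
        · have : p = i := Fin.ext (by rw [hiM, hp1])
          rw [this]
        · congr 1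
          exact Fin.ext (by simp only [Fin.val_mk]; omega)
        · exact ((hallQ p (by omega)).1).symm
    · -- free 1 at position 0
      left
      refine ⟨fun j : Fin (q - 1) =>
          s ⟨(j : ℕ) + 1, by have := j.isLt; omega⟩, ?_, ?_⟩
      · refine cspread_shift _ hq s h1 f hf ?_
        intro i hbig hki
        rcases hblk' i hbig with ⟨hle2, hall2⟩ | ⟨hlt2, hall2⟩
        · by_cases hbc : mmv c (s i) + 1 ≤ (i : ℕ)
          · exact Or.inl ⟨hbc, hall2⟩
          · exfalso
            exact hQ ⟨i, hbig, by omega, by omega, fun j hj => hall2 j (by omega) hj⟩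
        · exact Or.inr ⟨hlt2, hall2⟩
      · funext p
        simp only [gOne]
        split_ifs with hp1
        · congr 1
          exact Fin.ext (by simp only [Fin.val_mk]; omega)
        · have : p = i0 := Fin.ext (by omega)
          rw [this, hs0]

lemma geom_tail_le {w : ℝ} (hw0 : 0 < w) (hw1 : w < 1) (n : ℕ) :
    ∑ j ∈ Finset.range n, w ^ j ≤ (1 - w)⁻¹ := by
  rw [inv_eq_one_div, le_div_iff₀ (by linarith)]
  have h := geom_sum_mul w n
  nlinarith [pow_nonneg hw0.le n]

lemma sum_bound (ε w : ℝ) (hε : 0 < ε) (hw : w = (1 + ε) ^ (-(1/2) : ℝ))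
    (c : ℕ) (hc : 1 ≤ c) (hc1 : (2 : ℝ) ^ ((2 : ℝ) / (c : ℝ)) ≤ 1 + ε)
    (hc2 : w ^ c ≤ ε / 2 * (1 - w))
    (F : Finset ℕ) (hF : ∀ v ∈ F, 2 ≤ v) :
    ∑ v ∈ F, ((1 + ε)⁻¹) ^ (mmv c v) ≤ ε / 2 := by
  have h1ε : (0:ℝ) < 1 + ε := by linarith
  have hw0 : 0 < w := hw ▸ Real.rpow_pos_of_pos h1ε _
  have hw1 : w < 1 := hw ▸ Real.rpow_lt_one_of_one_lt_of_neg (by linarith) (by norm_num)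
  have hw2 : w ^ 2 = (1 + ε)⁻¹ := by
    rw [hw, ← Real.rpow_natCast ((1 + ε) ^ (-(1/2) : ℝ)) 2, ← Real.rpow_mul h1ε.le]
    norm_num [Real.rpow_neg_one]
  have hcpos : (0:ℝ) < (c : ℝ) := by exact_mod_cast Nat.lt_of_lt_of_le Nat.zero_lt_one hc
  have hwinv : w⁻¹ = (1 + ε) ^ ((1/2 : ℝ)) := by
    rw [hw, Real.rpow_neg h1ε.le, inv_inv]
  have h2c : (2:ℝ) ^ ((1:ℝ)/(c:ℝ)) ≤ w⁻¹ := by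
    rw [hwinv]
    have h := Real.rpow_le_rpow (by positivity) hc1 (by norm_num : (0:ℝ) ≤ 1/2)
    rw [← Real.rpow_mul (by norm_num : (0:ℝ) ≤ 2)] at h
    have he : ((2:ℝ)/(c:ℝ)) * (1/2) = 1/(c:ℝ) := by ring
    rwa [he] at h
  have hcount : ∀ m : ℕ, ((F.filter (fun v => mmv c v = m)).card : ℝ) ≤
      (2:ℝ) ^ ((m:ℝ)/(c:ℝ)) := by
    intro m
    have hsub : F.filter (fun v => mmv c v = m) ⊆
        Finset.Icc 2 ⌊(2:ℝ) ^ ((m:ℝ)/(c:ℝ))⌋₊ := by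
      intro v hv
      rw [Finset.mem_filter] at hv
      obtain ⟨hvF, hvm⟩ := hv
      have h2v := hF v hvF
      rw [Finset.mem_Icc]
      refine ⟨h2v, Nat.le_floor ?_⟩
      have hcl : (c:ℝ) * Real.logb 2 v ≤ (m:ℝ) := by
        calc (c:ℝ) * Real.logb 2 v ≤ (⌈(c:ℝ) * Real.logb 2 (v:ℕ)⌉₊ : ℝ) := Nat.le_ceil _
          _ = (m:ℝ) := by rw [show ⌈(c:ℝ) * Real.logb 2 (v:ℕ)⌉₊ = m from hvm]
      have hlb : Real.logb 2 v ≤ (m:ℝ)/(c:ℝ) := by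
        rw [le_div_iff₀ hcpos]
        linarith [mul_comm (c:ℝ) (Real.logb 2 (v:ℕ))]
      exact (Real.logb_le_iff_le_rpow (by norm_num)
        (by positivity : (0:ℝ) < (v:ℝ))).mp hlb
    have h1 : (F.filter (fun v => mmv c v = m)).card ≤
        (Finset.Icc 2 ⌊(2:ℝ) ^ ((m:ℝ)/(c:ℝ))⌋₊).card := Finset.card_le_card hsub
    have h2 : (Finset.Icc 2 ⌊(2:ℝ) ^ ((m:ℝ)/(c:ℝ))⌋₊).card ≤
        ⌊(2:ℝ) ^ ((m:ℝ)/(c:ℝ))⌋₊ := by rw [Nat.card_Icc]; omega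
    calc ((F.filter (fun v => mmv c v = m)).card : ℝ)
        ≤ (⌊(2:ℝ) ^ ((m:ℝ)/(c:ℝ))⌋₊ : ℝ) := by exact_mod_cast le_trans h1 h2
      _ ≤ (2:ℝ) ^ ((m:ℝ)/(c:ℝ)) := Nat.floor_le (by positivity)
  set K := F.sup (mmv c) with hK
  have hmaps : ∀ v ∈ F, mmv c v ∈ Finset.Icc c K := fun v hv =>
    Finset.mem_Icc.mpr ⟨mm_ge_c (hF v hv), Finset.le_sup hv⟩
  rw [← Finset.sum_fiberwise_of_maps_to hmaps (fun v => ((1 + ε)⁻¹) ^ (mmv c v))]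
  have hterm : ∀ m ∈ Finset.Icc c K,
      (∑ v ∈ F.filter (fun v => mmv c v = m), ((1 + ε)⁻¹) ^ (mmv c v)) ≤ w ^ m := by
    intro m hm
    have heq : (∑ v ∈ F.filter (fun v => mmv c v = m), ((1 + ε)⁻¹) ^ (mmv c v))
        = ((F.filter (fun v => mmv c v = m)).card : ℝ) * ((1 + ε)⁻¹) ^ m := by
      rw [Finset.sum_congr rfl (fun v hv => by
        rw [(Finset.mem_filter.mp hv).2]), Finset.sum_const, nsmul_eq_mul]
    rw [heq, ← hw2]
    have h2m : (2:ℝ) ^ ((m:ℝ)/(c:ℝ)) ≤ (w⁻¹) ^ m := by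
      have hp : ((2:ℝ) ^ ((1:ℝ)/(c:ℝ))) ^ m ≤ (w⁻¹) ^ m :=
        pow_le_pow_left₀ (by positivity) h2c m
      rwa [← Real.rpow_natCast ((2:ℝ) ^ ((1:ℝ)/(c:ℝ))) m, ← Real.rpow_mul
        (by norm_num : (0:ℝ) ≤ 2), show (1:ℝ)/(c:ℝ) * (m:ℕ) = (m:ℝ)/(c:ℝ) by ring] at hp
    calc ((F.filter (fun v => mmv c v = m)).card : ℝ) * (w ^ 2) ^ m
        ≤ (w⁻¹) ^ m * (w ^ 2) ^ m :=
          mul_le_mul_of_nonneg_right (le_trans (hcount m) h2m) (by positivity)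
      _ = (w⁻¹ * w ^ 2) ^ m := (mul_pow _ _ _).symm
      _ = w ^ m := by rw [show w⁻¹ * w ^ 2 = w by field_simp]
  calc (∑ m ∈ Finset.Icc c K, ∑ v ∈ F.filter (fun v => mmv c v = m), ((1 + ε)⁻¹) ^ (mmv c v))
      ≤ ∑ m ∈ Finset.Icc c K, w ^ m := Finset.sum_le_sum hterm
    _ = ∑ j ∈ Finset.range (K + 1 - c), w ^ (c + j) := by
        refine Finset.sum_nbij' (fun m => m - c) (fun j => c + j) ?_ ?_ ?_ ?_ ?_
        · intro m hm; rw [Finset.mem_Icc] at hm; rw [Finset.mem_range]; omega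
        · intro j hj; rw [Finset.mem_range] at hj; rw [Finset.mem_Icc]; omega
        · intro m hm; rw [Finset.mem_Icc] at hm; omega
        · intro j hj; omega
        · intro m hm; rw [Finset.mem_Icc] at hm; congr 1; omega
    _ = w ^ c * ∑ j ∈ Finset.range (K + 1 - c), w ^ j := by
        rw [Finset.mul_sum]
        exact Finset.sum_congr rfl (fun j _ => by rw [pow_add])
    _ ≤ w ^ c * (1 - w)⁻¹ :=
        mul_le_mul_of_nonneg_left (geom_tail_le hw0 hw1 _) (by positivity)
    _ ≤ (ε / 2 * (1 - w)) * (1 - w)⁻¹ :=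
        mul_le_mul_of_nonneg_right hc2 (inv_nonneg.mpr (by linarith))
    _ = ε / 2 := by
        rw [mul_assoc, mul_inv_cancel₀ (by linarith : (1:ℝ) - w ≠ 0), mul_one]

lemma sp_infinite {q : ℕ} (hq : 1 ≤ q) : ({s : Fin q → ℕ | CSpread 0 s}).Infinite := by
  apply Set.infinite_of_injective_forall_mem
    (f := fun n : ℕ => (fun _ : Fin q => n + 1 : Fin q → ℕ))
  · intro a b hab
    have h := congrFun hab ⟨0, hq⟩
    dsimp at h
    omega
  · intro n
    refine ⟨fun i => Nat.le_add_left 1 n, fun _ => none, fun i j h => (by cases h),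
      fun i hbig => Or.inl ⟨by simp, fun j hj1 hj2 => ?_⟩⟩
    simp only [Nat.cast_zero, zero_mul, Nat.ceil_zero, Nat.sub_zero] at hj1
    omega

/-- Fix `ε > 0`, let `w := (1+ε)^{-1/2}`, and let `c ∈ ℕ` satisfy `2^{2/c} ≤ 1+ε` and
`w^c ≤ (ε/2)(1-w)`. Then for each `q ≥ 1` the number of distinct `c`-spread sequences
of length `q` is at most `(1+ε)^q`. -/
theorem cspread_count (ε : ℝ) (hε : 0 < ε) (w : ℝ) (hw : w = (1 + ε) ^ (-(1/2) : ℝ))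
    (c : ℕ) (hc1 : (2 : ℝ) ^ ((2 : ℝ) / (c : ℝ)) ≤ 1 + ε)
    (hc2 : w ^ c ≤ ε / 2 * (1 - w)) (q : ℕ) (hq : 1 ≤ q) :
    (({s : Fin q → ℕ | CSpread c s} : Set (Fin q → ℕ)).ncard : ℝ) ≤ (1 + ε) ^ q := by
  have h1ε : (0:ℝ) < 1 + ε := by linarith
  by_cases hc0 : c = 0
  · subst hc0
    rw [(sp_infinite hq).ncard]
    push_cast
    positivity
  · have hc : 1 ≤ c := Nat.one_le_iff_ne_zero.mpr hc0
    have key : ∀ n : ℕ, (({s : Fin n → ℕ | CSpread c s}).ncard : ℝ) ≤ (1 + ε) ^ n := by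
      intro n
      induction n using Nat.strong_induction_on with
      | _ n ih =>
        rcases Nat.eq_zero_or_pos n with hn0 | hn1
        · subst hn0
          have hle1 : ({s : Fin 0 → ℕ | CSpread c s}).ncard ≤ 1 := by
            have hsub : {s : Fin 0 → ℕ | CSpread c s} ⊆ {fun _ : Fin 0 => 1} := by
              intro s _
              simp only [Set.mem_singleton_iff]
              funext i
              exact i.elim0
            exact le_trans (Set.ncard_le_ncard hsub (Set.finite_singleton _))
              (le_of_eq (Set.ncard_singleton _))
          rw [pow_zero]
          exact_mod_cast hle1
        · set V := (Finset.Icc 2 (2 ^ n)).filter (fun v => mmv c v + 1 ≤ n) with hV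
          have hcoverfin : (gOne n '' {t : Fin (n - 1) → ℕ | CSpread c t} ∪
              ⋃ v ∈ V, (gBig c n v 0 '' {t : Fin (n - (mmv c v + 1)) → ℕ | CSpread c t} ∪
                gBig c n v (mmv c v) ''
                  {t : Fin (n - (mmv c v + 1)) → ℕ | CSpread c t})).Finite := by
            refine Set.Finite.union ((sp_finite hc).image _) ?_
            refine Set.Finite.biUnion V.finite_toSet (fun v _ => ?_)
            exact Set.Finite.union ((sp_finite hc).image _) ((sp_finite hc).image _)
          have hNat : ({s : Fin n → ℕ | CSpread c s}).ncard ≤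
              ({t : Fin (n - 1) → ℕ | CSpread c t}).ncard +
              ∑ v ∈ V, 2 * ({t : Fin (n - (mmv c v + 1)) → ℕ | CSpread c t}).ncard := by
            refine le_trans (Set.ncard_le_ncard (sp_cover hc hn1) hcoverfin) ?_
            refine le_trans (Set.ncard_union_le _ _) ?_
            have hA : (gOne n '' {t : Fin (n - 1) → ℕ | CSpread c t}).ncard ≤
                ({t : Fin (n - 1) → ℕ | CSpread c t}).ncard :=
              Set.ncard_image_le (sp_finite hc)
            have hU : (⋃ v ∈ V, (gBig c n v 0 ''
                  {t : Fin (n - (mmv c v + 1)) → ℕ | CSpread c t} ∪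
                gBig c n v (mmv c v) ''
                  {t : Fin (n - (mmv c v + 1)) → ℕ | CSpread c t})).ncard ≤
                ∑ v ∈ V, 2 * ({t : Fin (n - (mmv c v + 1)) → ℕ | CSpread c t}).ncard := by
              refine le_trans (ncard_biUnion_le V _ (fun v =>
                Set.Finite.union ((sp_finite hc).image _) ((sp_finite hc).image _))) ?_
              refine Finset.sum_le_sum (fun v _ => ?_)
              refine le_trans (Set.ncard_union_le _ _) ?_
              have h1 := Set.ncard_image_le (f := gBig c n v 0)
                (s := {t : Fin (n - (mmv c v + 1)) → ℕ | CSpread c t}) (sp_finite hc)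
              have h2 := Set.ncard_image_le (f := gBig c n v (mmv c v))
                (s := {t : Fin (n - (mmv c v + 1)) → ℕ | CSpread c t}) (sp_finite hc)
              omega
            rw [← hV]
            omega
          have hFmem : ∀ v ∈ V, 2 ≤ v := by
            intro v hv
            rw [hV, Finset.mem_filter, Finset.mem_Icc] at hv
            exact hv.1.1
          calc (({s : Fin n → ℕ | CSpread c s}).ncard : ℝ)
              ≤ (({t : Fin (n - 1) → ℕ | CSpread c t}).ncard : ℝ) +
                ∑ v ∈ V, 2 * (({t : Fin (n - (mmv c v + 1)) → ℕ | CSpread c t}).ncard : ℝ) := by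
                exact_mod_cast hNat
            _ ≤ (1 + ε) ^ (n - 1) +
                ∑ v ∈ V, 2 * ((1 + ε) ^ (n - 1) * ((1 + ε)⁻¹) ^ (mmv c v)) := by
                refine add_le_add (ih _ (by omega)) (Finset.sum_le_sum (fun v hv => ?_))
                have hm1 : mmv c v + 1 ≤ n := (Finset.mem_filter.mp hv).2
                have heq : ((1 + ε) : ℝ) ^ (n - (mmv c v + 1)) =
                    (1 + ε) ^ (n - 1) * ((1 + ε)⁻¹) ^ (mmv c v) := by
                  have hsplit : ((1 + ε) : ℝ) ^ (n - 1) =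
                      (1 + ε) ^ (n - (mmv c v + 1)) * (1 + ε) ^ (mmv c v) := by
                    rw [← pow_add]
                    congr 1
                    omega
                  rw [inv_pow, hsplit, mul_assoc,
                    mul_inv_cancel₀ (pow_ne_zero _ (ne_of_gt h1ε)), mul_one]
                have := ih (n - (mmv c v + 1)) (by omega)
                rw [heq] at this
                nlinarith [this]
            _ = (1 + ε) ^ (n - 1) +
                2 * (1 + ε) ^ (n - 1) * ∑ v ∈ V, ((1 + ε)⁻¹) ^ (mmv c v) := by
                rw [Finset.mul_sum]
                congr 1
                exact Finset.sum_congr rfl (fun v _ => by ring)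
            _ ≤ (1 + ε) ^ (n - 1) + 2 * (1 + ε) ^ (n - 1) * (ε / 2) := by
                refine add_le_add le_rfl ?_
                exact mul_le_mul_of_nonneg_left
                  (sum_bound ε w hε hw c hc hc1 hc2 V hFmem) (by positivity)
            _ = (1 + ε) ^ n := by
                have hpow : ((1 + ε) : ℝ) ^ n = (1 + ε) ^ (n - 1) * (1 + ε) := by
                  rw [← pow_succ]
                  congr 1
                  omega
                rw [hpow]
                ring
    exact key q
end

section
/- The number of binary words of length 2t that are Dyck words and do not contain 0110110 as a substring is at most 3.992^{t+1}. -/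
/-- Binary words are lists over `Bool` (`false` = 0, `true` = 1). The pattern `0110110`. -/
def pattern0110110 : List Bool := [false, true, true, false, true, true, false]

/-- A Dyck word: equally many zeroes and ones, and in every prefix the number of
zeroes is at least the number of ones. -/
def IsDyck (l : List Bool) : Prop :=
  l.count false = l.count true ∧ ∀ p : List Bool, p <+: l → p.count true ≤ p.count false

open Set List

def avoidSet (n : ℕ) : Set (List Bool) := {l | l.length = n ∧ ¬ pattern0110110 <:+: l}

lemma finite_len (n : ℕ) : {l : List Bool | l.length = n}.Finite := List.finite_length_eq _ _

lemma avoid_finite (n : ℕ) : (avoidSet n).Finite :=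
  (finite_len n).subset fun _ hl => hl.1

lemma ncard_len_le (n : ℕ) : {l : List Bool | l.length = n}.ncard ≤ 2 ^ n := by
  induction n with
  | zero =>
    have : {l : List Bool | l.length = 0} = {[]} := by
      ext l; simp [List.length_eq_zero_iff]
    simp [this]
  | succ n ih =>
    have hsub : {l : List Bool | l.length = n + 1} ⊆
        ((false :: ·) '' {l | l.length = n}) ∪ ((true :: ·) '' {l | l.length = n}) := by
      rintro l hl
      match l with
      | [] => simp at hl
      | b :: l' =>
        have hl' : l'.length = n := by simpa using hl
        cases b
        · exact Or.inl ⟨l', hl', rfl⟩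
        · exact Or.inr ⟨l', hl', rfl⟩
    calc {l : List Bool | l.length = n + 1}.ncard
        ≤ (((false :: ·) '' {l | l.length = n}) ∪ ((true :: ·) '' {l | l.length = n})).ncard :=
          ncard_le_ncard hsub (((finite_len n).image _).union ((finite_len n).image _))
      _ ≤ ((false :: ·) '' {l : List Bool | l.length = n}).ncard
            + ((true :: ·) '' {l : List Bool | l.length = n}).ncard := ncard_union_le _ _
      _ ≤ 2 ^ n + 2 ^ n := add_le_add
            (le_trans (ncard_image_le (finite_len n)) ih)
            (le_trans (ncard_image_le (finite_len n)) ih)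
      _ = 2 ^ (n + 1) := by ring

lemma ncard_prod' {α β : Type*} (s : Set α) (t : Set β) :
    (s ×ˢ t).ncard = s.ncard * t.ncard := by
  rw [← Nat.card_coe_set_eq, Nat.card_congr (Equiv.Set.prod s t), Nat.card_prod,
    Nat.card_coe_set_eq, Nat.card_coe_set_eq]

lemma avoid_step (n : ℕ) : (avoidSet (n + 7)).ncard ≤ 127 * (avoidSet n).ncard := by
  set A : Set (List Bool) := {v | v.length = 7} \ {pattern0110110} with hA
  have hAcard : A.ncard ≤ 127 := by
    have hmem : pattern0110110 ∈ {v : List Bool | v.length = 7} := by decide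
    rw [hA, Set.ncard_diff_singleton_of_mem hmem]
    have := ncard_len_le 7
    omega
  have hF : Set.InjOn (fun l : List Bool => (l.take 7, l.drop 7)) (avoidSet (n + 7)) := by
    intro x _ y _ h
    have h1 : x.take 7 = y.take 7 := congrArg Prod.fst h
    have h2 : x.drop 7 = y.drop 7 := congrArg Prod.snd h
    calc x = x.take 7 ++ x.drop 7 := (List.take_append_drop 7 x).symm
      _ = y.take 7 ++ y.drop 7 := by rw [h1, h2]
      _ = y := List.take_append_drop 7 y
  have himg : (fun l : List Bool => (l.take 7, l.drop 7)) '' (avoidSet (n + 7))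
      ⊆ A ×ˢ avoidSet n := by
    rintro ⟨a, b⟩ ⟨l, ⟨hlen, havoid⟩, heq⟩
    obtain ⟨rfl, rfl⟩ : a = l.take 7 ∧ b = l.drop 7 := by
      constructor
      · exact (congrArg Prod.fst heq).symm
      · exact (congrArg Prod.snd heq).symm
    refine ⟨⟨?_, ?_⟩, ?_, ?_⟩
    · simp [hlen]
    · intro hcon
      simp only [Set.mem_singleton_iff] at hcon
      exact havoid (hcon ▸ (List.take_prefix 7 l).isInfix)
    · simp [hlen]
    · intro hcon
      exact havoid (hcon.trans (List.drop_suffix 7 l).isInfix)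
  calc (avoidSet (n + 7)).ncard
      = ((fun l : List Bool => (l.take 7, l.drop 7)) '' (avoidSet (n + 7))).ncard :=
        (ncard_image_of_injOn hF).symm
    _ ≤ (A ×ˢ avoidSet n).ncard := by
        refine ncard_le_ncard himg ?_
        exact (((finite_len 7).subset Set.diff_subset).prod (avoid_finite n))
    _ = A.ncard * (avoidSet n).ncard := ncard_prod' _ _
    _ ≤ 127 * (avoidSet n).ncard := Nat.mul_le_mul_right _ hAcard

lemma avoid_bound (n : ℕ) : (avoidSet n).ncard ≤ 127 ^ (n / 7) * 2 ^ (n % 7) := by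
  induction n using Nat.strong_induction_on with
  | _ n ih =>
    rcases lt_or_ge n 7 with h | h
    · have h1 : (avoidSet n).ncard ≤ 2 ^ n :=
        le_trans (ncard_le_ncard (fun _ hl => hl.1) (finite_len n)) (ncard_len_le n)
      rw [Nat.div_eq_of_lt h, Nat.mod_eq_of_lt h]
      simpa using h1
    · obtain ⟨m, rfl⟩ : ∃ m, n = m + 7 := ⟨n - 7, by omega⟩
      have h1 := avoid_step m
      have h2 := ih m (by omega)
      have hd : (m + 7) / 7 = m / 7 + 1 := by omega
      have hm : (m + 7) % 7 = m % 7 := by omega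
      rw [hd, hm, pow_succ]
      calc (avoidSet (m + 7)).ncard ≤ 127 * (avoidSet m).ncard := h1
        _ ≤ 127 * (127 ^ (m / 7) * 2 ^ (m % 7)) := Nat.mul_le_mul_left _ h2
        _ = 127 ^ (m / 7) * 127 * 2 ^ (m % 7) := by ring

lemma numeric_bound (t : ℕ) :
    ((127 : ℝ) ^ (2 * t / 7) * 2 ^ (2 * t % 7)) ≤ (3.992 : ℝ) ^ (t + 1) := by
  set q := 2 * t / 7 with hq
  set r := 2 * t % 7 with hr
  have hqr : 7 * q + r = 2 * t := Nat.div_add_mod (2 * t) 7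
  have hr7 : r < 7 := Nat.mod_lt _ (by norm_num)
  have ha : (0 : ℝ) ≤ 127 ^ q * 2 ^ r := by positivity
  have hb : (0 : ℝ) ≤ (3.992 : ℝ) ^ (t + 1) := by positivity
  have hsq : ((127 : ℝ) ^ q * 2 ^ r) ^ 2 ≤ ((3.992 : ℝ) ^ (t + 1)) ^ 2 := by
    have e1 : ((127 : ℝ) ^ q * 2 ^ r) ^ 2 = ((127 : ℝ) ^ 2) ^ q * (4 : ℝ) ^ r := by
      rw [mul_pow, ← pow_mul, ← pow_mul, mul_comm q 2, mul_comm r 2, pow_mul, pow_mul]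
      norm_num
    have e2 : ((3.992 : ℝ) ^ (t + 1)) ^ 2 = ((3.992 : ℝ) ^ 7) ^ q * (3.992 : ℝ) ^ (r + 2) := by
      rw [← pow_mul, ← pow_mul, ← pow_add]
      congr 1
      omega
    rw [e1, e2]
    have k1 : ((127 : ℝ) ^ 2) ^ q ≤ ((3.992 : ℝ) ^ 7) ^ q := by
      apply pow_le_pow_left₀ (by positivity)
      norm_num
    have k2 : (4 : ℝ) ^ r ≤ (3.992 : ℝ) ^ (r + 2) := by
      interval_cases r <;> norm_num
    exact mul_le_mul k1 k2 (by positivity) (by positivity)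
  exact (pow_le_pow_iff_left₀ ha hb (by norm_num)).mp hsq

/-- The number of Dyck words of length `2t` not containing `0110110` as a (contiguous)
substring is at most `3.992^{t+1}`. -/
theorem special_dyck_count (t : ℕ) :
    (({l : List Bool | l.length = 2 * t ∧ IsDyck l ∧ ¬ pattern0110110 <:+: l} :
        Set (List Bool)).ncard : ℝ) ≤ (3.992 : ℝ) ^ (t + 1) := by
  have hsub : {l : List Bool | l.length = 2 * t ∧ IsDyck l ∧ ¬ pattern0110110 <:+: l}
      ⊆ avoidSet (2 * t) := fun l hl => ⟨hl.1, hl.2.2⟩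
  have h1 : ({l : List Bool | l.length = 2 * t ∧ IsDyck l ∧ ¬ pattern0110110 <:+: l} :
      Set (List Bool)).ncard ≤ 127 ^ (2 * t / 7) * 2 ^ (2 * t % 7) :=
    le_trans (ncard_le_ncard hsub (avoid_finite _)) (avoid_bound _)
  calc (({l : List Bool | l.length = 2 * t ∧ IsDyck l ∧ ¬ pattern0110110 <:+: l} :
        Set (List Bool)).ncard : ℝ)
      ≤ ((127 ^ (2 * t / 7) * 2 ^ (2 * t % 7) : ℕ) : ℝ) := by exact_mod_cast h1
    _ = (127 : ℝ) ^ (2 * t / 7) * 2 ^ (2 * t % 7) := by push_cast; ring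
    _ ≤ (3.992 : ℝ) ^ (t + 1) := numeric_bound t
end

section
/- For every k ≥ 1, the number of binary words of length k not containing 0110110 as a contiguous substring is at most γ^{k+1}, where γ := (2⁷ − 1)^{1/7}. -/
namespace AvoidAux

/-- The set of binary words of length `k` avoiding the pattern. -/
def S (k : ℕ) : Set (List Bool) := {l | l.length = k ∧ ¬ pattern0110110 <:+: l}

lemma S_finite (k : ℕ) : (S k).Finite :=
  (List.finite_length_eq Bool k).subset fun _ h => h.1

lemma ncard_len (k : ℕ) : ({l : List Bool | l.length = k}).ncard = 2 ^ k := by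
  rw [← Nat.card_coe_set_eq]
  rw [Nat.card_congr (Equiv.subtypeEquivRight (fun l => Iff.rfl) :
    {l : List Bool // l ∈ {l : List Bool | l.length = k}} ≃ {l : List Bool // l.length = k})]
  show Nat.card (List.Vector Bool k) = 2 ^ k
  rw [Nat.card_eq_fintype_card, card_vector]
  simp

lemma ncard_S_le (k : ℕ) : (S k).ncard ≤ 2 ^ k := by
  calc (S k).ncard ≤ ({l : List Bool | l.length = k}).ncard :=
        Set.ncard_le_ncard (fun _ h => h.1) (List.finite_length_eq Bool k)
    _ = 2 ^ k := ncard_len k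

/-- The set of words of length 7 different from the pattern. -/
def T7 : Set (List Bool) := {l | l.length = 7} \ {pattern0110110}

lemma T7_finite : T7.Finite := (List.finite_length_eq Bool 7).subset fun _ h => h.1

lemma ncard_T7 : T7.ncard = 127 := by
  have hp : pattern0110110 ∈ {l : List Bool | l.length = 7} := by
    simp [pattern0110110]
  rw [T7, Set.ncard_diff_singleton_of_mem hp, ncard_len]
  norm_num

lemma step (k : ℕ) : (S (k + 7)).ncard ≤ 127 * (S k).ncard := by
  have hfin : Finite (↥(T7 ×ˢ S k)) := (T7_finite.prod (S_finite k)).to_subtype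
  have hinj : Function.Injective
      (fun l : ↥(S (k + 7)) =>
        (⟨(l.1.take 7, l.1.drop 7), by
          constructor
          · constructor
            · simp [l.2.1]
            · intro h
              exact l.2.2 (h ▸ (List.take_prefix 7 l.1).isInfix)
          · constructor
            · simp [l.2.1]
            · intro h
              exact l.2.2 (h.trans (List.drop_suffix 7 l.1).isInfix)⟩ :
          ↥(T7 ×ˢ S k))) := by
    rintro ⟨a, ha⟩ ⟨b, hb⟩ h
    simp only [Subtype.mk.injEq, Prod.mk.injEq] at h
    have h := Prod.ext_iff.mp (congrArg Subtype.val h)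
    have := congrArg₂ List.append h.1 h.2
    simpa [List.take_append_drop] using this
  have hcard := Nat.card_le_card_of_injective _ hinj
  have h1 : Nat.card ↥(T7 ×ˢ S k) = 127 * (S k).ncard := by
    rw [Nat.card_congr (Equiv.Set.prod T7 (S k)), Nat.card_prod,
      Nat.card_coe_set_eq, Nat.card_coe_set_eq, ncard_T7]
  calc (S (k + 7)).ncard = Nat.card ↥(S (k + 7)) := Nat.card_coe_set_eq _ ▸ rfl
    _ ≤ Nat.card ↥(T7 ×ˢ S k) := hcard
    _ = 127 * (S k).ncard := h1

noncomputable def γ : ℝ := (127 : ℝ) ^ ((1 : ℝ) / 7)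

lemma γ_pos : 0 < γ := Real.rpow_pos_of_pos (by norm_num) _

lemma γ_pow7 : γ ^ 7 = 127 := by
  rw [γ, ← Real.rpow_natCast ((127 : ℝ) ^ ((1:ℝ)/7)) 7, ← Real.rpow_mul (by norm_num)]
  norm_num

lemma main (k : ℕ) (hk : 1 ≤ k) : ((S k).ncard : ℝ) ≤ γ ^ (k + 1) := by
  induction k using Nat.strong_induction_on with
  | _ k ih =>
    by_cases h7 : k ≤ 7
    · -- base case: 2^k ≤ γ^(k+1), via 7th powers
      have h2 : ((S k).ncard : ℝ) ≤ 2 ^ k := by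
        exact_mod_cast Nat.cast_le.mpr (ncard_S_le k) |>.trans (by push_cast; norm_num)
      refine h2.trans ?_
      have hbase : ((2 : ℝ) ^ k) ^ 7 ≤ (γ ^ (k + 1)) ^ 7 := by
        have : (γ ^ (k + 1)) ^ 7 = 127 ^ (k + 1) := by
          rw [← pow_mul, mul_comm, pow_mul, γ_pow7]
        rw [this, ← pow_mul]
        interval_cases k <;> norm_num
      exact le_of_pow_le_pow_left₀ (by norm_num) (pow_nonneg γ_pos.le _) hbase
    · obtain ⟨m, rfl⟩ : ∃ m, k = m + 7 := ⟨k - 7, by omega⟩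
      have hm : 1 ≤ m := by omega
      have ihm := ih m (by omega) hm
      have hstep : ((S (m + 7)).ncard : ℝ) ≤ 127 * (S m).ncard := by
        exact_mod_cast Nat.cast_le.mpr (step m)
      calc ((S (m + 7)).ncard : ℝ) ≤ 127 * (S m).ncard := hstep
        _ ≤ 127 * γ ^ (m + 1) := by
            exact mul_le_mul_of_nonneg_left ihm (by norm_num)
        _ = γ ^ 7 * γ ^ (m + 1) := by rw [γ_pow7]
        _ = γ ^ (m + 7 + 1) := by ring
        _ = γ ^ (m + 7 + 1) := rfl

end AvoidAux

/-- For every `k ≥ 1`, the number of binary words of length `k` not containing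
`0110110` as a contiguous substring is at most `γ^{k+1}`, where `γ = (2⁷ - 1)^{1/7}`. -/
theorem avoid_count (k : ℕ) (hk : 1 ≤ k) :
    (({l : List Bool | l.length = k ∧ ¬ pattern0110110 <:+: l} :
        Set (List Bool)).ncard : ℝ) ≤ ((2 ^ 7 - 1 : ℝ) ^ ((1 : ℝ) / 7)) ^ (k + 1) := by
  have h : ((2:ℝ) ^ 7 - 1) = 127 := by norm_num
  rw [h]
  exact AvoidAux.main k hk
end

section
/- Every cycle is nonrepetitively 5-choosable: for any assignment of lists of 5 colours to the vertices of a cycle C_n (n ≥ 3), there is a colouring from the lists with no repetitively coloured path, given that every path is nonrepetitively 4-choosable. -/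
private lemma count_map_eq {α β : Type*} [DecidableEq α] [DecidableEq β]
    (f : α → β) (a : α) (b : β) (h : ∀ x, f x = b ↔ x = a) :
    ∀ s : List α, (s.map f).count b = s.count a := by
  intro s
  induction s with
  | nil => simp
  | cons x t ih =>
    simp only [List.map_cons, List.count_cons, ih, beq_iff_eq, h x]

private lemma fin_succ_val {n : ℕ} [NeZero n] (hn : 2 ≤ n) {a b : Fin n}
    (h : a = b + 1) (ha0 : a ≠ 0) : b.val + 1 = a.val := by
  subst h
  have h1 : (1 : Fin n).val = 1 := by
    rw [Fin.val_one']; exact Nat.mod_eq_of_lt (by omega)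
  rcases Nat.lt_or_ge (b.val + 1) n with h' | h'
  · rw [Fin.val_add, h1, Nat.mod_eq_of_lt h']
  · exfalso
    apply ha0
    apply Fin.ext
    have hb : b.val + 1 = n := by have := b.isLt; omega
    rw [Fin.val_add, h1, hb, Nat.mod_self, Fin.val_zero]

/-- Assuming every path is nonrepetitively 4-choosable (Grytczuk–Przybyło–Zhu),
every cycle `C_n` (`n ≥ 3`) is nonrepetitively 5-choosable. -/
theorem cycle_five_choosable
    (hpath : ∀ (n : ℕ) (L : Fin n → Finset ℕ), (∀ v, 4 ≤ (L v).card) →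
      ∃ φ : Fin n → ℕ, (∀ v, φ v ∈ L v) ∧ Nonrepetitive (SimpleGraph.pathGraph n) φ) :
    ∀ (n : ℕ), 3 ≤ n → ∀ L : Fin n → Finset ℕ, (∀ v, 5 ≤ (L v).card) →
      ∃ φ : Fin n → ℕ, (∀ v, φ v ∈ L v) ∧ Nonrepetitive (SimpleGraph.cycleGraph n) φ := by
  intro n hn L hL
  haveI : NeZero n := ⟨by omega⟩
  have hne : (L 0).Nonempty := Finset.card_pos.mp (by have := hL 0; omega)
  obtain ⟨c0, hc0⟩ := hne
  obtain ⟨φ, hφmem, hφnr⟩ := hpath n (fun v => (L v).erase c0) (fun v => by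
    show 4 ≤ ((L v).erase c0).card
    have h1 := Finset.pred_card_le_card_erase (s := L v) (a := c0)
    have h2 := hL v
    omega)
  set ψ : Fin n → ℕ := Function.update φ 0 c0 with hψ
  have hψ0 : ψ 0 = c0 := Function.update_self _ _ _
  have hψne : ∀ v : Fin n, v ≠ 0 → ψ v = φ v := fun v hv => Function.update_of_ne hv _ _
  have hiff : ∀ v : Fin n, ψ v = c0 ↔ v = 0 := by
    intro v
    constructor
    · intro hv
      by_contra h
      rw [hψne v h] at hv
      exact Finset.ne_of_mem_erase (hφmem v) hv
    · rintro rfl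
      exact hψ0
  refine ⟨ψ, ?_, ?_⟩
  · intro v
    by_cases hv : v = 0
    · subst hv; rw [hψ0]; exact hc0
    · rw [hψne v hv]
      exact Finset.mem_of_mem_erase (hφmem v)
  · intro u v p hp l hl hmap
    by_cases h0 : (0 : Fin n) ∈ p.support
    · -- vertex 0 on the path: colour c0 appears exactly once, but l ++ l has even counts
      have hcnt := congrArg (List.count c0) hmap
      rw [List.count_append, count_map_eq ψ 0 c0 hiff,
        List.count_eq_one_of_mem hp.support_nodup h0] at hcnt
      omega
    · -- vertex 0 avoided: transfer the path to the path graph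
      have hsub : ∀ e ∈ p.edges, e ∈ (SimpleGraph.pathGraph n).edgeSet := by
        intro e he
        induction e with
        | h a b =>
          have ha : a ∈ p.support := p.fst_mem_support_of_mem_edges he
          have hb : b ∈ p.support := p.snd_mem_support_of_mem_edges he
          have hadj : (SimpleGraph.cycleGraph n).Adj a b := p.adj_of_mem_edges he
          have ha0 : a ≠ 0 := fun h => h0 (h ▸ ha)
          have hb0 : b ≠ 0 := fun h => h0 (h ▸ hb)
          rw [SimpleGraph.cycleGraph_adj'] at hadj
          rw [SimpleGraph.mem_edgeSet, SimpleGraph.pathGraph_adj]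
          have h1 : (1 : Fin n).val = 1 := by
            rw [Fin.val_one']; exact Nat.mod_eq_of_lt (by omega)
          rcases hadj with h | h
          · right
            have heq : a = b + 1 := by
              have hs : a - b = 1 := Fin.ext (by rw [h, h1])
              have := eq_add_of_sub_eq hs
              rwa [add_comm] at this
            exact fin_succ_val (by omega) heq ha0
          · left
            have heq : b = a + 1 := by
              have hs : b - a = 1 := Fin.ext (by rw [h, h1])
              have := eq_add_of_sub_eq hs
              rwa [add_comm] at this
            exact fin_succ_val (by omega) heq hb0
      set q := p.transfer (SimpleGraph.pathGraph n) hsub with hq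
      have hqsupp : q.support = p.support := p.support_transfer hsub
      have hqpath : q.IsPath := by
        rw [SimpleGraph.Walk.isPath_def, hqsupp]
        exact hp.support_nodup
      refine hφnr q hqpath l hl ?_
      rw [hqsupp, ← hmap]
      apply List.map_congr_left
      intro x hx
      exact (hψne x (fun h => h0 (h ▸ hx))).symm
end
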